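/- arXiv:2504.02694 — 4 statements merged into one kernel-verified Lean document; each statement's English description precedes it below -/
import Mathlib

section
/- In the setting of (P_sl) and (P̂_sl,n): suppose (β*, γ*) is a KKT pair of (P_sl) at which LICQ holds, every row Cⱼ of C is nonzero, and for each n, (β̂ₙ, γ̂ₙ) is a random KKT pair of (P̂_sl,n). If β̂ₙ → β* in probability and Δₙ := max{‖T̂ₙ − T‖₂, ‖Ĉₙ − C‖_F, ‖d̂ₙ − d‖₂} = O_P(n^{-1/2}), then ‖γ̂ₙ − γ*‖₂ = O_P(‖β̂ₙ − β*‖₂ + n^{-1/2}). -/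
open MeasureTheory Filter

/-- Gradient of `f : ℝ^k → ℝ` at `x`, as a vector in `ℝ^k`. -/
noncomputable def gradE {k : ℕ} (f : EuclideanSpace ℝ (Fin k) → ℝ) (x : EuclideanSpace ℝ (Fin k)) :
    EuclideanSpace ℝ (Fin k) :=
  WithLp.toLp 2 (fun i => fderiv ℝ f x (EuclideanSpace.single i 1))

/-- Frobenius norm of a real matrix. -/
noncomputable def frobNorm {r k : ℕ} (M : Matrix (Fin r) (Fin k) ℝ) : ℝ :=
  Real.sqrt (∑ i, ∑ j, (M i j) ^ 2)

set_option maxHeartbeats 1000000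

lemma aux_cs {m : ℕ} (a b : Fin m → ℝ) :
    |∑ i, a i * b i| ≤ Real.sqrt (∑ i, a i ^ 2) * Real.sqrt (∑ i, b i ^ 2) := by
  rw [← Real.sqrt_sq_eq_abs, ← Real.sqrt_mul (by positivity)]
  exact Real.sqrt_le_sqrt (Finset.sum_mul_sq_le_sq_mul_sq _ _ _)

lemma aux_norm_eq {ι : Type*} [Fintype ι] (x : EuclideanSpace ℝ ι) :
    ‖x‖ = Real.sqrt (∑ i, x i ^ 2) := by
  simp [EuclideanSpace.norm_eq, sq_abs]

lemma aux_comp {ι : Type*} [Fintype ι] (x : EuclideanSpace ℝ ι) (j : ι) : |x j| ≤ ‖x‖ := by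
  rw [aux_norm_eq, ← Real.sqrt_sq_eq_abs]
  exact Real.sqrt_le_sqrt (Finset.single_le_sum (f := fun i => x i ^ 2)
    (fun i _ => sq_nonneg (x i)) (Finset.mem_univ j))

lemma aux_row {r k : ℕ} (M : Matrix (Fin r) (Fin k) ℝ) (j : Fin r) :
    Real.sqrt (∑ i, M j i ^ 2) ≤ frobNorm M :=
  Real.sqrt_le_sqrt (Finset.single_le_sum (f := fun j' => ∑ i, M j' i ^ 2)
    (fun j' _ => Finset.sum_nonneg fun i _ => sq_nonneg _) (Finset.mem_univ j))

lemma aux_rowvec {r k : ℕ} (M : Matrix (Fin r) (Fin k) ℝ) (j : Fin r)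
    (x : EuclideanSpace ℝ (Fin k)) :
    |∑ i, M j i * x i| ≤ frobNorm M * ‖x‖ := by
  refine (aux_cs (fun i => M j i) x).trans ?_
  rw [aux_norm_eq]
  exact mul_le_mul_of_nonneg_right (aux_row M j) (Real.sqrt_nonneg _)

lemma aux_matvec {r k : ℕ} (M : Matrix (Fin r) (Fin k) ℝ) (γ : EuclideanSpace ℝ (Fin r))
    (w : EuclideanSpace ℝ (Fin k)) (hw : ∀ i, w i = ∑ j, M j i * γ j) :
    ‖w‖ ≤ frobNorm M * ‖γ‖ := by
  rw [aux_norm_eq, aux_norm_eq, frobNorm, ← Real.sqrt_mul (by positivity)]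
  apply Real.sqrt_le_sqrt
  calc ∑ i, w i ^ 2 ≤ ∑ i, (∑ j, M j i ^ 2) * (∑ j, γ j ^ 2) := by
        refine Finset.sum_le_sum fun i _ => ?_
        rw [hw]
        exact Finset.sum_mul_sq_le_sq_mul_sq _ _ _
    _ = (∑ i, ∑ j, M j i ^ 2) * (∑ j, γ j ^ 2) := (Finset.sum_mul _ _ _).symm
    _ = (∑ j, ∑ i, M j i ^ 2) * (∑ j, γ j ^ 2) := by rw [Finset.sum_comm]

lemma aux_anti {k : ℕ} {ι : Type*} [Fintype ι] (v : ι → (Fin k → ℝ))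
    (hv : LinearIndependent ℝ v) :
    ∃ c > (0:ℝ), ∀ g : EuclideanSpace ℝ ι, ∀ w : EuclideanSpace ℝ (Fin k),
      (∀ i, w i = ∑ j, g j * v j i) → c * ‖g‖ ≤ ‖w‖ := by
  classical
  let f : EuclideanSpace ℝ ι →ₗ[ℝ] EuclideanSpace ℝ (Fin k) :=
    { toFun := fun g => (WithLp.toLp 2 (fun i => ∑ j, g j * v j i) : EuclideanSpace ℝ (Fin k))
      map_add' := by
        intro a b; ext i
        simp [add_mul, Finset.sum_add_distrib]
      map_smul' := by
        intro c a; ext i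
        simp [Finset.mul_sum, mul_assoc] }
  have hker : LinearMap.ker f = ⊥ := by
    rw [LinearMap.ker_eq_bot']
    intro g hg
    have h0 : ∀ j, g j = 0 := by
      refine Fintype.linearIndependent_iff.mp hv g ?_
      funext i
      have : f g i = 0 := by rw [hg]; rfl
      simpa [f, Finset.sum_apply] using this
    ext j; exact h0 j
  obtain ⟨K, hK, hanti⟩ := f.exists_antilipschitzWith hker
  refine ⟨(K:ℝ)⁻¹, by positivity, fun g w hw => ?_⟩
  have hwf : w = f g := by ext i; exact hw i
  have := hanti.le_mul_dist g 0
  simp only [map_zero, dist_zero_right] at this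
  rw [hwf]
  rw [inv_mul_le_iff₀ (show (0:ℝ) < K by exact_mod_cast hK)]
  exact this


lemma aux_grad {k q : ℕ} (h : EuclideanSpace ℝ (Fin k) × EuclideanSpace ℝ (Fin q) → ℝ)
    (hh : ContDiff ℝ 2 h) (t : EuclideanSpace ℝ (Fin q)) (β : EuclideanSpace ℝ (Fin k))
    (i : Fin k) :
    gradE (fun β => h (β, t)) β i = fderiv ℝ h (β, t) (EuclideanSpace.single i 1, 0) := by
  have hd : HasFDerivAt h (fderiv ℝ h (β, t)) (β, t) :=
    ((hh.differentiable (by norm_num)) (β, t)).hasFDerivAt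
  have hcomp : HasFDerivAt (fun β => h (β, t))
      ((fderiv ℝ h (β, t)).comp (ContinuousLinearMap.inl ℝ _ _)) β :=
    hd.comp β (hasFDerivAt_prodMk_left β t)
  rw [gradE, hcomp.fderiv]
  simp

lemma aux_lip {k q : ℕ} (h : EuclideanSpace ℝ (Fin k) × EuclideanSpace ℝ (Fin q) → ℝ)
    (hh : ContDiff ℝ 2 h) (x₀ : EuclideanSpace ℝ (Fin k) × EuclideanSpace ℝ (Fin q)) :
    ∃ K : NNReal, ∃ ρ > (0:ℝ), ∀ x,
      dist x x₀ < ρ → ‖fderiv ℝ h x - fderiv ℝ h x₀‖ ≤ K * dist x x₀ := by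
  have hC1 : ContDiffAt ℝ 1 (fderiv ℝ h) x₀ :=
    (hh.fderiv_right (by norm_num)).contDiffAt
  obtain ⟨K, t0, ht0, hlip⟩ := hC1.exists_lipschitzOnWith
  obtain ⟨ρ, hρ, hball⟩ := Metric.mem_nhds_iff.mp ht0
  refine ⟨K, ρ, hρ, fun x hx => ?_⟩
  have h1 : x ∈ t0 := hball hx
  have h2 : x₀ ∈ t0 := hball (Metric.mem_ball_self hρ)
  have := hlip.dist_le_mul x h1 x₀ h2
  rwa [dist_eq_norm] at this
lemma det_bound {r k q : ℕ}
    (h : EuclideanSpace ℝ (Fin k) × EuclideanSpace ℝ (Fin q) → ℝ)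
    (hh : ContDiff ℝ 2 h)
    (T : EuclideanSpace ℝ (Fin q)) (C : Matrix (Fin r) (Fin k) ℝ) (d : EuclideanSpace ℝ (Fin r))
    (βstar : EuclideanSpace ℝ (Fin k)) (γstar : EuclideanSpace ℝ (Fin r))
    (hstat : ∀ i, gradE (fun β => h (β, T)) βstar i + ∑ j, C j i * γstar j = 0)
    (hcs : ∀ j, γstar j * ((∑ i, C j i * βstar i) - d j) = 0)
    (hLICQ : LinearIndependent ℝ
      (fun j : {j : Fin r // ∑ i, C j i * βstar i = d j} => (fun i => C j.1 i : Fin k → ℝ))) :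
    ∃ δ > (0:ℝ), ∃ M > (0:ℝ), ∀ (βh : EuclideanSpace ℝ (Fin k)) (γh : EuclideanSpace ℝ (Fin r))
      (Th : EuclideanSpace ℝ (Fin q)) (Ch : Matrix (Fin r) (Fin k) ℝ)
      (dh : EuclideanSpace ℝ (Fin r)),
      (∀ i, gradE (fun β => h (β, Th)) βh i + ∑ j, Ch j i * γh j = 0) →
      (∀ j, γh j * ((∑ i, Ch j i * βh i) - dh j) = 0) →
      ‖βh - βstar‖ ≤ δ → ‖Th - T‖ ≤ δ → frobNorm (Ch - C) ≤ δ → ‖dh - d‖ ≤ δ →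
      ‖γh - γstar‖ ≤ M * (‖βh - βstar‖ + ‖Th - T‖ + frobNorm (Ch - C)) := by
  classical
  obtain ⟨c, hc, hanti⟩ := aux_anti
    (fun j : {j : Fin r // ∑ i, C j i * βstar i = d j} => (fun i => C j.1 i : Fin k → ℝ)) hLICQ
  obtain ⟨K, ρ, hρ, hKlip⟩ := aux_lip h hh (βstar, T)
  set P : Fin r → Prop := fun j => ∑ i, C j i * βstar i = d j with hPdef
  set tf : Fin r → ℝ := fun j => (∑ i, C j i * βstar i) - d j with htf
  set F : Finset ℝ :=
    insert 1 ((Finset.univ.filter (fun j => ¬ P j)).image fun j => |tf j|) with hF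
  have hFne : F.Nonempty := ⟨1, Finset.mem_insert_self _ _⟩
  set ρ₂ := F.min' hFne with hρ₂def
  have hρ₂pos : 0 < ρ₂ := by
    have hpos : ∀ x ∈ F, 0 < x := by
      intro x hx
      rcases Finset.mem_insert.mp hx with h1 | h2
      · simp [h1]
      · obtain ⟨j, hj, rfl⟩ := Finset.mem_image.mp h2
        have hne : tf j ≠ 0 := sub_ne_zero.mpr (Finset.mem_filter.mp hj).2
        exact abs_pos.mpr hne
    exact hpos _ (F.min'_mem hFne)
  have hρ₂le : ∀ j, ¬ P j → ρ₂ ≤ |tf j| := fun j hj =>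
    F.min'_le _ (Finset.mem_insert_of_mem
      (Finset.mem_image_of_mem _ (Finset.mem_filter.mpr ⟨Finset.mem_univ j, hj⟩)))
  have hfC : (0:ℝ) ≤ frobNorm C := Real.sqrt_nonneg _
  set δ : ℝ := min (min 1 (c/2))
      (min (ρ/2) (ρ₂ / (2 * (frobNorm C + ‖βstar‖ + 2)))) with hδdef
  have hδpos : 0 < δ := by
    refine lt_min (lt_min one_pos (by positivity)) (lt_min (by positivity) ?_)
    have : (0:ℝ) < frobNorm C + ‖βstar‖ + 2 := by positivity
    positivity
  set M : ℝ := (2/c) * (Real.sqrt k * K + ‖γstar‖ + 1) with hMdef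
  have hMpos : 0 < M := by positivity
  refine ⟨δ, hδpos, M, hMpos, ?_⟩
  intro βh γh Th Ch dh hstat' hcs' hβ hT hCle hdle
  have hδ1 : δ ≤ 1 := le_trans (min_le_left _ _) (min_le_left _ _)
  have hδc : δ ≤ c/2 := le_trans (min_le_left _ _) (min_le_right _ _)
  have hδρ : δ ≤ ρ/2 := le_trans (min_le_right _ _) (min_le_left _ _)
  have hδρ₂ : δ ≤ ρ₂ / (2 * (frobNorm C + ‖βstar‖ + 2)) :=
    le_trans (min_le_right _ _) (min_le_right _ _)
  have hfCh : (0:ℝ) ≤ frobNorm (Ch - C) := Real.sqrt_nonneg _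
  -- inactive multipliers vanish
  have hγ0 : ∀ j, ¬ P j → γstar j = 0 := by
    intro j hj
    rcases mul_eq_zero.mp (hcs j) with h0 | h0
    · exact h0
    · exact absurd (sub_eq_zero.mp h0) hj
  have hγh0 : ∀ j, ¬ P j → γh j = 0 := by
    intro j hj
    have key : (∑ i, Ch j i * βh i) - dh j - tf j
        = (∑ i, C j i * ((βh - βstar) i)) + (∑ i, (Ch - C) j i * βh i) - ((dh - d) j) := by
      simp only [htf, Matrix.sub_apply, PiLp.sub_apply, sub_mul, mul_sub,
        Finset.sum_sub_distrib]
      ring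
    have h1 : |∑ i, C j i * ((βh - βstar) i)| ≤ frobNorm C * δ :=
      (aux_rowvec C j (βh - βstar)).trans (mul_le_mul_of_nonneg_left hβ hfC)
    have hβhn : ‖βh‖ ≤ ‖βstar‖ + 1 := by
      have := norm_sub_norm_le βh βstar
      linarith
    have h2 : |∑ i, (Ch - C) j i * βh i| ≤ δ * (‖βstar‖ + 1) := by
      refine (aux_rowvec (Ch - C) j βh).trans ?_
      exact mul_le_mul hCle hβhn (norm_nonneg _) hδpos.le
    have h3 : |(dh - d) j| ≤ δ := (aux_comp (dh - d) j).trans hdle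
    have h2K : δ * (2 * (frobNorm C + ‖βstar‖ + 2)) ≤ ρ₂ := by
      rw [← le_div_iff₀ (by positivity)]
      exact hδρ₂
    have habs : |(∑ i, Ch j i * βh i) - dh j - tf j| < |tf j| := by
      rw [key]
      have t1 : |(∑ i, C j i * ((βh - βstar) i)) + (∑ i, (Ch - C) j i * βh i) - ((dh - d) j)|
          ≤ |∑ i, C j i * ((βh - βstar) i)| + |∑ i, (Ch - C) j i * βh i| + |(dh - d) j| := by
        calc _ ≤ |(∑ i, C j i * ((βh - βstar) i)) + (∑ i, (Ch - C) j i * βh i)| + |(dh - d) j| :=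
              abs_sub _ _
          _ ≤ _ := by gcongr; exact abs_add_le _ _
      have hlt := hρ₂le j hj
      nlinarith [h1, h2, h3, h2K, hρ₂pos]
    have hne : (∑ i, Ch j i * βh i) - dh j ≠ 0 := by
      intro h0
      rw [h0, zero_sub, abs_neg] at habs
      exact lt_irrefl _ habs
    rcases mul_eq_zero.mp (hcs' j) with h0 | h0
    · exact h0
    · exact absurd h0 hne
  -- the restricted multiplier difference
  set g : EuclideanSpace ℝ {j : Fin r // P j} := WithLp.toLp 2 (fun j : {j : Fin r // P j} => γh j.1 - γstar j.1) with hgdef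
  have hsum_eq : ∀ f : Fin r → ℝ, (∀ j, ¬ P j → f j = 0) →
      ∑ j, f j = ∑ j : {j : Fin r // P j}, f j.1 := by
    intro f hf
    rw [← Finset.sum_filter_add_sum_filter_not Finset.univ P f,
      Finset.sum_eq_zero (fun j hj => hf j (Finset.mem_filter.mp hj).2), add_zero,
      Finset.sum_subtype (p := P) (s := Finset.univ.filter P) (fun x => by simp) f]
  have hgnorm : ‖g‖ = ‖γh - γstar‖ := by
    rw [aux_norm_eq, aux_norm_eq]
    congr 1
    rw [hsum_eq (fun j => ((γh - γstar) j)^2)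
      (fun j hj => by
        show ((γh - γstar) j)^2 = 0
        simp [PiLp.sub_apply, hγh0 j hj, hγ0 j hj])]
    exact Finset.sum_congr rfl fun j _ => by simp [hgdef, PiLp.sub_apply]
  set gd : EuclideanSpace ℝ (Fin k) :=
    WithLp.toLp 2 (fun i => gradE (fun β => h (β, Th)) βh i - gradE (fun β => h (β, T)) βstar i) with hgd
  set w : EuclideanSpace ℝ (Fin k) := WithLp.toLp 2 (fun i => ∑ j, (Ch - C) j i * γh j) with hwdef
  set Φg : EuclideanSpace ℝ (Fin k) :=
    WithLp.toLp 2 (fun i => ∑ j : {j : Fin r // P j}, g j * C j.1 i) with hΦdef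
  have hΦeq : Φg = -gd - w := by
    ext i
    have e1 : ∑ j : {j : Fin r // P j}, g j * C j.1 i
        = ∑ j : Fin r, (γh j - γstar j) * C j i :=
      (hsum_eq (fun j => (γh j - γstar j) * C j i)
        (fun j hj => by show (γh j - γstar j) * C j i = 0; rw [hγh0 j hj, hγ0 j hj]; ring)).symm
    have e2 := hstat' i
    have e3 := hstat i
    show Φg i = (-gd - w) i
    have hΦi : Φg i = ∑ j : Fin r, (γh j - γstar j) * C j i := e1
    have hsplit : ∑ j : Fin r, (γh j - γstar j) * C j i
        = (∑ j, Ch j i * γh j) - (∑ j, (Ch j i - C j i) * γh j) - ∑ j, C j i * γstar j := by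
      simp only [sub_mul, Finset.sum_sub_distrib]
      have c1 : ∑ x : Fin r, γh x * C x i = ∑ x : Fin r, C x i * γh x :=
        Finset.sum_congr rfl fun x _ => mul_comm _ _
      have c2 : ∑ x : Fin r, γstar x * C x i = ∑ x : Fin r, C x i * γstar x :=
        Finset.sum_congr rfl fun x _ => mul_comm _ _
      rw [c1, c2]
      ring
    have hwi : w i = ∑ j, (Ch j i - C j i) * γh j := by
      simp [hwdef, Matrix.sub_apply]
    have hsub : (-gd - w) i = -(gd i) - w i := by
      simp [PiLp.sub_apply, PiLp.neg_apply]
    rw [hΦi, hsplit, hsub, hwi]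
    have hgdi : gd i = gradE (fun β => h (β, Th)) βh i - gradE (fun β => h (β, T)) βstar i := rfl
    rw [hgdi]
    linarith
  have hclose : c * ‖g‖ ≤ ‖gd‖ + ‖w‖ := by
    have h1 := hanti g Φg (fun i => rfl)
    calc c * ‖g‖ ≤ ‖Φg‖ := h1
      _ = ‖-gd - w‖ := by rw [hΦeq]
      _ ≤ ‖-gd‖ + ‖w‖ := norm_sub_le _ _
      _ = ‖gd‖ + ‖w‖ := by rw [norm_neg]
  have hwle : ‖w‖ ≤ frobNorm (Ch - C) * (‖γstar‖ + ‖g‖) := by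
    refine (aux_matvec (Ch - C) γh w (fun i => rfl)).trans ?_
    have hγhn : ‖γh‖ ≤ ‖γstar‖ + ‖g‖ := by
      rw [hgnorm]
      have := norm_sub_norm_le γh γstar
      linarith
    exact mul_le_mul_of_nonneg_left hγhn hfCh
  have hgdle : ‖gd‖ ≤ Real.sqrt k * ((K:ℝ) * (‖βh - βstar‖ + ‖Th - T‖)) := by
    have hdist : dist ((βh, Th) : EuclideanSpace ℝ (Fin k) × EuclideanSpace ℝ (Fin q))
        (βstar, T) < ρ := by
      rw [Prod.dist_eq]
      apply max_lt
      · rw [dist_eq_norm]; linarith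
      · rw [dist_eq_norm]; linarith
    have hKb := hKlip (βh, Th) hdist
    set B : ℝ := (K:ℝ) * dist ((βh, Th) : EuclideanSpace ℝ (Fin k) × EuclideanSpace ℝ (Fin q))
      (βstar, T) with hB
    have hBnn : 0 ≤ B := mul_nonneg K.coe_nonneg dist_nonneg
    have hcomp : ∀ i, |gd i| ≤ B := by
      intro i
      have hgdi : gd i = fderiv ℝ h (βh, Th) ((EuclideanSpace.single i 1 : EuclideanSpace ℝ (Fin k)), (0 : EuclideanSpace ℝ (Fin q)))
          - fderiv ℝ h (βstar, T) ((EuclideanSpace.single i 1 : EuclideanSpace ℝ (Fin k)), (0 : EuclideanSpace ℝ (Fin q))) := by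
        show gradE (fun β => h (β, Th)) βh i - gradE (fun β => h (β, T)) βstar i = _
        rw [aux_grad h hh Th βh i, aux_grad h hh T βstar i]
      rw [hgdi]
      have heq : fderiv ℝ h (βh, Th) ((EuclideanSpace.single i 1 : EuclideanSpace ℝ (Fin k)), (0 : EuclideanSpace ℝ (Fin q)))
          - fderiv ℝ h (βstar, T) ((EuclideanSpace.single i 1 : EuclideanSpace ℝ (Fin k)), (0 : EuclideanSpace ℝ (Fin q)))
          = (fderiv ℝ h (βh, Th) - fderiv ℝ h (βstar, T))
              ((EuclideanSpace.single i 1 : EuclideanSpace ℝ (Fin k)), (0 : EuclideanSpace ℝ (Fin q))) := by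
        simp
      rw [heq, ← Real.norm_eq_abs]
      calc ‖(fderiv ℝ h (βh, Th) - fderiv ℝ h (βstar, T))
              ((EuclideanSpace.single i 1 : EuclideanSpace ℝ (Fin k)), (0 : EuclideanSpace ℝ (Fin q)))‖
          ≤ ‖fderiv ℝ h (βh, Th) - fderiv ℝ h (βstar, T)‖
            * ‖((EuclideanSpace.single i 1 : EuclideanSpace ℝ (Fin k)), (0 : EuclideanSpace ℝ (Fin q)))‖ :=
            ContinuousLinearMap.le_opNorm _ _
        _ = ‖fderiv ℝ h (βh, Th) - fderiv ℝ h (βstar, T)‖ := by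
            rw [Prod.norm_def]
            simp [EuclideanSpace.norm_single]
        _ ≤ B := hKb
    rw [aux_norm_eq]
    have hstep : Real.sqrt (∑ i, gd i ^ 2) ≤ Real.sqrt ((k:ℝ) * B ^ 2) := by
      apply Real.sqrt_le_sqrt
      calc ∑ i, gd i ^ 2 ≤ ∑ _i : Fin k, B ^ 2 := by
            refine Finset.sum_le_sum fun i _ => ?_
            have hab := abs_le.mp (hcomp i)
            exact sq_le_sq' (by linarith [hab.1]) hab.2
        _ = (k:ℝ) * B ^ 2 := by
            rw [Finset.sum_const, Finset.card_univ, Fintype.card_fin, nsmul_eq_mul]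
    refine hstep.trans ?_
    rw [Real.sqrt_mul (Nat.cast_nonneg k), Real.sqrt_sq hBnn]
    refine mul_le_mul_of_nonneg_left ?_ (Real.sqrt_nonneg _)
    rw [hB]
    refine mul_le_mul_of_nonneg_left ?_ K.coe_nonneg
    rw [Prod.dist_eq]
    apply max_le
    · rw [dist_eq_norm]; have := norm_nonneg (Th - T); linarith
    · rw [dist_eq_norm]; have := norm_nonneg (βh - βstar); linarith
  -- absorb and conclude
  have habsorb : frobNorm (Ch - C) * ‖g‖ ≤ (c/2) * ‖g‖ :=
    mul_le_mul_of_nonneg_right (hCle.trans hδc) (norm_nonneg g)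
  have key : (c/2) * ‖g‖ ≤ Real.sqrt k * (K:ℝ) * (‖βh - βstar‖ + ‖Th - T‖)
      + ‖γstar‖ * frobNorm (Ch - C) := by
    nlinarith [hclose, hwle, hgdle, habsorb]
  have key2 : ‖g‖ ≤ (2/c) * (Real.sqrt k * (K:ℝ) * (‖βh - βstar‖ + ‖Th - T‖)
      + ‖γstar‖ * frobNorm (Ch - C)) := by
    have hrw : ‖g‖ = (2/c) * ((c/2) * ‖g‖) := by field_simp
    rw [hrw]
    exact mul_le_mul_of_nonneg_left key (by positivity)
  rw [← hgnorm]
  refine key2.trans ?_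
  have ha1 : (0:ℝ) ≤ ‖βh - βstar‖ := norm_nonneg _
  have ha2 : (0:ℝ) ≤ ‖Th - T‖ := norm_nonneg _
  have hS : (0:ℝ) ≤ Real.sqrt k * (K:ℝ) := mul_nonneg (Real.sqrt_nonneg _) K.coe_nonneg
  have hγn : (0:ℝ) ≤ ‖γstar‖ := norm_nonneg _
  have hfinal : Real.sqrt k * (K:ℝ) * (‖βh - βstar‖ + ‖Th - T‖) + ‖γstar‖ * frobNorm (Ch - C)
      ≤ (Real.sqrt k * (K:ℝ) + ‖γstar‖ + 1)
        * (‖βh - βstar‖ + ‖Th - T‖ + frobNorm (Ch - C)) := by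
    have hp1 : (0:ℝ) ≤ Real.sqrt k * (K:ℝ) * frobNorm (Ch - C) := mul_nonneg hS hfCh
    have hp2 : (0:ℝ) ≤ ‖γstar‖ * (‖βh - βstar‖ + ‖Th - T‖) :=
      mul_nonneg hγn (add_nonneg ha1 ha2)
    nlinarith [hp1, hp2]
  calc 2 / c * (Real.sqrt k * (K:ℝ) * (‖βh - βstar‖ + ‖Th - T‖) + ‖γstar‖ * frobNorm (Ch - C))
      ≤ 2 / c * ((Real.sqrt k * (K:ℝ) + ‖γstar‖ + 1)
          * (‖βh - βstar‖ + ‖Th - T‖ + frobNorm (Ch - C))) :=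
        mul_le_mul_of_nonneg_left hfinal (div_nonneg (by norm_num : (0:ℝ) ≤ 2) hc.le)
    _ = M * (‖βh - βstar‖ + ‖Th - T‖ + frobNorm (Ch - C)) := by rw [hMdef]; ring

/-- Convergence rate of the KKT multiplier estimators: if `(β*, γ*)` is a
KKT pair of `(P_sl)` at which LICQ holds, every row of `C` is nonzero, `(β̂ₙ, γ̂ₙ)` are random
KKT pairs of the approximating programs, `β̂ₙ → β*` in probability, and
`Δₙ = O_P(n^{-1/2})`, then `‖γ̂ₙ − γ*‖₂ = O_P(‖β̂ₙ − β*‖₂ + n^{-1/2})`. -/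
theorem stmt5 {r k q : ℕ}
    {Ω : Type*} [MeasurableSpace Ω] (μ : Measure Ω) [IsProbabilityMeasure μ]
    (h : EuclideanSpace ℝ (Fin k) × EuclideanSpace ℝ (Fin q) → ℝ)
    (hh : ContDiff ℝ 2 h)
    (T : EuclideanSpace ℝ (Fin q)) (C : Matrix (Fin r) (Fin k) ℝ) (d : EuclideanSpace ℝ (Fin r))
    (βstar : EuclideanSpace ℝ (Fin k)) (γstar : EuclideanSpace ℝ (Fin r))
    -- (β*, γ*) is a KKT pair of (P_sl)
    (hγnonneg : ∀ j, 0 ≤ γstar j)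
    (hstat : ∀ i, gradE (fun β => h (β, T)) βstar i + ∑ j, C j i * γstar j = 0)
    (hcs : ∀ j, γstar j * ((∑ i, C j i * βstar i) - d j) = 0)
    -- every row of C is nonzero
    (hrows : ∀ j, (fun i => C j i) ≠ (0 : Fin k → ℝ))
    -- LICQ holds at β*
    (hLICQ : LinearIndependent ℝ
      (fun j : {j : Fin r // ∑ i, C j i * βstar i = d j} => (fun i => C j.1 i : Fin k → ℝ)))
    -- random estimators and random KKT pairs of the approximating programs
    (That : ℕ → Ω → EuclideanSpace ℝ (Fin q))
    (Chat : ℕ → Ω → Matrix (Fin r) (Fin k) ℝ)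
    (dhat : ℕ → Ω → EuclideanSpace ℝ (Fin r))
    (βhat : ℕ → Ω → EuclideanSpace ℝ (Fin k))
    (γhat : ℕ → Ω → EuclideanSpace ℝ (Fin r))
    (hKKThat : ∀ n, ∀ᵐ ω ∂μ,
      (∀ j, 0 ≤ γhat n ω j) ∧
      (∀ i, gradE (fun β => h (β, That n ω)) (βhat n ω) i
              + ∑ j, Chat n ω j i * γhat n ω j = 0) ∧
      (∀ j, γhat n ω j * ((∑ i, Chat n ω j i * βhat n ω i) - dhat n ω j) = 0))
    -- β̂ₙ → β* in probability
    (hβconv : ∀ ε > (0 : ℝ),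
      Tendsto (fun n => μ {ω | ε < ‖βhat n ω - βstar‖}) atTop (nhds 0))
    -- Δₙ = O_P(n^{-1/2})
    (hΔ : ∀ ε > (0 : ℝ), ∃ M > (0 : ℝ), ∃ N : ℕ, ∀ n ≥ N,
      μ {ω | M / Real.sqrt n
          < max (max ‖That n ω - T‖ (frobNorm (Chat n ω - C))) ‖dhat n ω - d‖}
        ≤ ENNReal.ofReal ε) :
    -- conclusion: ‖γ̂ₙ − γ*‖₂ = O_P(‖β̂ₙ − β*‖₂ + n^{-1/2})
    ∀ ε > (0 : ℝ), ∃ M > (0 : ℝ), ∃ N : ℕ, ∀ n ≥ N,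
      μ {ω | M * (‖βhat n ω - βstar‖ + 1 / Real.sqrt n) < ‖γhat n ω - γstar‖}
        ≤ ENNReal.ofReal ε := by
  obtain ⟨δ, hδ, M, hM, hdet⟩ := det_bound h hh T C d βstar γstar hstat hcs hLICQ
  intro ε hε
  obtain ⟨M₀, hM₀, N₁, hN₁⟩ := hΔ (ε/2) (by linarith)
  have hhalf : (0 : ENNReal) < ENNReal.ofReal (ε/2) := ENNReal.ofReal_pos.mpr (by linarith)
  obtain ⟨N₂, hN₂⟩ := Filter.eventually_atTop.mp ((hβconv δ hδ).eventually (gt_mem_nhds hhalf))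
  set N₃ : ℕ := ⌈(M₀/δ)^2⌉₊ + 1 with hN₃def
  refine ⟨M * (1 + 2*M₀) + 1, by positivity, max (max N₁ N₂) N₃, fun n hn => ?_⟩
  have hnN₁ : n ≥ N₁ := le_trans (le_trans (le_max_left _ _) (le_max_left _ _)) hn
  have hnN₂ : n ≥ N₂ := le_trans (le_trans (le_max_right _ _) (le_max_left _ _)) hn
  have hnN₃ : n ≥ N₃ := le_trans (le_max_right _ _) hn
  have hn1 : 1 ≤ n := le_trans (by simp [hN₃def]) hnN₃
  have hsq : (0:ℝ) < Real.sqrt n := Real.sqrt_pos.mpr (by exact_mod_cast hn1)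
  have hMδ : M₀ / Real.sqrt n ≤ δ := by
    rw [div_le_iff₀ hsq]
    have h1 : (M₀/δ)^2 ≤ (n:ℝ) := by
      calc (M₀/δ)^2 ≤ (⌈(M₀/δ)^2⌉₊ : ℝ) := Nat.le_ceil _
        _ ≤ (n:ℝ) := by exact_mod_cast le_trans (Nat.le_succ _) hnN₃
    have h2 : M₀/δ ≤ Real.sqrt n := by
      rw [show M₀/δ = Real.sqrt ((M₀/δ)^2) from (Real.sqrt_sq (by positivity)).symm]
      exact Real.sqrt_le_sqrt h1
    calc M₀ = (M₀/δ) * δ := by field_simp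
      _ ≤ Real.sqrt n * δ := mul_le_mul_of_nonneg_right h2 hδ.le
      _ = δ * Real.sqrt n := mul_comm _ _
  -- the three bad events
  set A := {ω | δ < ‖βhat n ω - βstar‖} with hA
  set B := {ω | M₀ / Real.sqrt n
      < max (max ‖That n ω - T‖ (frobNorm (Chat n ω - C))) ‖dhat n ω - d‖} with hB
  set Z := {ω | ¬ ((∀ j, 0 ≤ γhat n ω j) ∧
      (∀ i, gradE (fun β => h (β, That n ω)) (βhat n ω) i
              + ∑ j, Chat n ω j i * γhat n ω j = 0) ∧
      (∀ j, γhat n ω j * ((∑ i, Chat n ω j i * βhat n ω i) - dhat n ω j) = 0))} with hZ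
  have hZ0 : μ Z = 0 := by
    have := hKKThat n
    rw [ae_iff] at this
    exact this
  have hsub : {ω | (M * (1 + 2*M₀) + 1) * (‖βhat n ω - βstar‖ + 1 / Real.sqrt n)
      < ‖γhat n ω - γstar‖} ⊆ A ∪ B ∪ Z := by
    intro ω hω
    by_contra hmem
    simp only [Set.mem_union, not_or] at hmem
    obtain ⟨⟨hnA, hnB⟩, hnZ⟩ := hmem
    rw [hA, Set.mem_setOf_eq, not_lt] at hnA
    rw [hB, Set.mem_setOf_eq, not_lt] at hnB
    rw [hZ, Set.mem_setOf_eq, not_not] at hnZ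
    obtain ⟨_, hstat', hcs'⟩ := hnZ
    have hTle : ‖That n ω - T‖ ≤ M₀ / Real.sqrt n :=
      le_trans (le_trans (le_max_left _ _) (le_max_left _ _)) hnB
    have hCle : frobNorm (Chat n ω - C) ≤ M₀ / Real.sqrt n :=
      le_trans (le_trans (le_max_right _ _) (le_max_left _ _)) hnB
    have hdle : ‖dhat n ω - d‖ ≤ M₀ / Real.sqrt n :=
      le_trans (le_max_right _ _) hnB
    have hbound := hdet (βhat n ω) (γhat n ω) (That n ω) (Chat n ω) (dhat n ω)
      hstat' hcs' hnA (hTle.trans hMδ) (hCle.trans hMδ) (hdle.trans hMδ)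
    rw [Set.mem_setOf_eq] at hω
    have hinv : (0:ℝ) < 1 / Real.sqrt n := by positivity
    have ha1 : (0:ℝ) ≤ ‖βhat n ω - βstar‖ := norm_nonneg _
    have hMsn : M₀ / Real.sqrt n = M₀ * (1 / Real.sqrt n) := by ring
    have e1 : ‖γhat n ω - γstar‖
        ≤ M * (‖βhat n ω - βstar‖ + 2*(M₀ * (1 / Real.sqrt n))) := by
      refine hbound.trans (mul_le_mul_of_nonneg_left ?_ hM.le)
      linarith [hTle, hCle]
    have e2 : M * (‖βhat n ω - βstar‖ + 2*(M₀ * (1 / Real.sqrt n)))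
        ≤ (M*(1+2*M₀)) * (‖βhat n ω - βstar‖ + 1 / Real.sqrt n) := by
      nlinarith [mul_nonneg hM.le hinv.le, mul_nonneg (mul_nonneg hM.le hM₀.le) ha1]
    have e3 : (M*(1+2*M₀)) * (‖βhat n ω - βstar‖ + 1 / Real.sqrt n)
        < (M*(1+2*M₀)+1) * (‖βhat n ω - βstar‖ + 1 / Real.sqrt n) := by
      have hpos : (0:ℝ) < ‖βhat n ω - βstar‖ + 1 / Real.sqrt n := by linarith
      nlinarith [hpos]
    linarith [hω, e1, e2, e3]
  calc μ _ ≤ μ (A ∪ B ∪ Z) := measure_mono hsub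
    _ ≤ μ (A ∪ B) + μ Z := measure_union_le _ _
    _ = μ (A ∪ B) := by rw [hZ0, add_zero]
    _ ≤ μ A + μ B := measure_union_le _ _
    _ ≤ ENNReal.ofReal (ε/2) + ENNReal.ofReal (ε/2) := by
        exact add_le_add (hN₂ n hnN₂).le (hN₁ n hnN₁)
    _ = ENNReal.ofReal ε := by
        rw [← ENNReal.ofReal_add (by linarith) (by linarith)]
        norm_num
end

section
/- Let h : ℝ^k → ℝ be twice continuously differentiable, C ∈ ℝ^{m×k} with linearly independent rows, and d ∈ ℝ^m. Let β* ∈ ℝ^k and γ* ∈ ℝ^m satisfy: ∇h(β*) + Cᵀγ* = 0; γ*_j (Cⱼβ* − dⱼ) = 0 for all j; for every j either (Cⱼβ* = dⱼ and γ*_j > 0) or (Cⱼβ* < dⱼ and γ*_j = 0); and ∇²h(β*) is positive definite. Define H : ℝ^k × ℝ^m × (ℝ^k × ℝ^m) → ℝ^{k+m} by H(β, γ, (ξ₁, ξ₂)) = ( ∇h(β) + Cᵀγ + ξ₁ , diag(γ)(Cβ − d − ξ₂) ). Then: (a) the partial Jacobian of H with respect to (β, γ) at (β*, γ*, 0) is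 invertible; and (b) there exist a neighborhood U of 0 in ℝ^{k+m} and a continuously differentiable map ξ ↦ (β̄(ξ), γ̄(ξ)) on U with (β̄(0), γ̄(0)) = (β*, γ*), H(β̄(ξ), γ̄(ξ), ξ) = 0 for all ξ ∈ U, and whose derivative at ξ = 0 equals −[J_{(β,γ)}H(β*, γ*, 0)]⁻¹ · J_ξ H(β*, γ*, 0), where J_ξ H(β*, γ*, 0) is the block-diagonal matrix blockdiag(I_k, −diag(γ*)). -/
open Matrix

/-- Hessian matrix of `f : ℝ^k → ℝ` at `x`. -/
noncomputable def hessE {k : ℕ} (f : EuclideanSpace ℝ (Fin k) → ℝ) (x : EuclideanSpace ℝ (Fin k)) :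
    Matrix (Fin k) (Fin k) ℝ :=
  fun i j => fderiv ℝ (fun y => fderiv ℝ f y (EuclideanSpace.single j 1)) x (EuclideanSpace.single i 1)

/-- The KKT system `H(β, γ, ξ) = (∇h(β) + Cᵀγ + ξ₁, diag(γ)(Cβ − d − ξ₂))` of the perturbed
program: minimize `h(β) + βᵀξ₁` subject to `Cβ − d − ξ₂ ≤ 0`. -/
noncomputable def Hkkt {k m : ℕ} (h : EuclideanSpace ℝ (Fin k) → ℝ)
    (C : Matrix (Fin m) (Fin k) ℝ) (d : Fin m → ℝ)
    (p : EuclideanSpace ℝ (Fin k) × EuclideanSpace ℝ (Fin m))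
    (ξ : EuclideanSpace ℝ (Fin k) × EuclideanSpace ℝ (Fin m)) :
    EuclideanSpace ℝ (Fin k) × EuclideanSpace ℝ (Fin m) :=
  (WithLp.toLp 2 (fun i => gradE h p.1 i + (∑ j, C j i * p.2 j) + ξ.1 i : Fin k → ℝ),
   WithLp.toLp 2 (fun j => p.2 j * ((∑ i, C j i * p.1 i) - d j - ξ.2 j) : Fin m → ℝ))

namespace Stmt8Aux

open ContinuousLinearMap

variable {k m : ℕ}

local notation "E" => EuclideanSpace ℝ (Fin k)
local notation "F" => EuclideanSpace ℝ (Fin m)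

noncomputable def Pβ : (E × F) × (E × F) →L[ℝ] E := (fst ℝ E F).comp (fst ℝ (E × F) (E × F))
noncomputable def Pγ : (E × F) × (E × F) →L[ℝ] F := (snd ℝ E F).comp (fst ℝ (E × F) (E × F))
noncomputable def Pξ₁ : (E × F) × (E × F) →L[ℝ] E := (fst ℝ E F).comp (snd ℝ (E × F) (E × F))
noncomputable def Pξ₂ : (E × F) × (E × F) →L[ℝ] F := (snd ℝ E F).comp (snd ℝ (E × F) (E × F))

/-- linear map underlying the full Jacobian of the KKT map at the reference point -/
noncomputable def kktDlin (C : Matrix (Fin m) (Fin k) ℝ) (d : Fin m → ℝ)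
    (βstar : E) (γstar : F) (Ψ : E →L[ℝ] E →L[ℝ] ℝ) :
    ((E × F) × (E × F)) →ₗ[ℝ] (E × F) where
  toFun v :=
    (WithLp.toLp 2 (fun i => Ψ v.1.1 (EuclideanSpace.single i 1) + (∑ j, C j i * v.1.2 j) + v.2.1 i : Fin k → ℝ),
     WithLp.toLp 2 (fun j => v.1.2 j * ((∑ i, C j i * βstar i) - d j) +
        γstar j * ((∑ i, C j i * v.1.1 i) - v.2.2 j) : Fin m → ℝ))
  map_add' x y := by
    refine Prod.ext (PiLp.ext fun i => ?_) (PiLp.ext fun j => ?_) <;>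
      simp [Prod.fst_add, Prod.snd_add, PiLp.add_apply, map_add, ContinuousLinearMap.add_apply,
        mul_add, add_mul, Finset.sum_add_distrib] <;> ring
  map_smul' a x := by
    refine Prod.ext (PiLp.ext fun i => ?_) (PiLp.ext fun j => ?_) <;>
      simp [PiLp.smul_apply, _root_.map_smul, smul_eq_mul, Finset.mul_sum, mul_add, mul_sub,
        mul_comm, mul_left_comm, mul_assoc]

noncomputable def kktD (C : Matrix (Fin m) (Fin k) ℝ) (d : Fin m → ℝ)
    (βstar : E) (γstar : F) (Ψ : E →L[ℝ] E →L[ℝ] ℝ) :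
    ((E × F) × (E × F)) →L[ℝ] (E × F) :=
  (kktDlin C d βstar γstar Ψ).toContinuousLinearMap

theorem kktD_apply (C : Matrix (Fin m) (Fin k) ℝ) (d : Fin m → ℝ)
    (βstar : E) (γstar : F) (Ψ : E →L[ℝ] E →L[ℝ] ℝ) (v : (E × F) × (E × F)) :
    kktD C d βstar γstar Ψ v =
    (WithLp.toLp 2 (fun i => Ψ v.1.1 (EuclideanSpace.single i 1) + (∑ j, C j i * v.1.2 j) + v.2.1 i : Fin k → ℝ),
     WithLp.toLp 2 (fun j => v.1.2 j * ((∑ i, C j i * βstar i) - d j) +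
        γstar j * ((∑ i, C j i * v.1.1 i) - v.2.2 j) : Fin m → ℝ)) := rfl

noncomputable def c1 (C : Matrix (Fin m) (Fin k) ℝ) (Ψ : E →L[ℝ] E →L[ℝ] ℝ) (i : Fin k) :
    ((E × F) × (E × F)) →L[ℝ] ℝ :=
  ((ContinuousLinearMap.apply ℝ ℝ (EuclideanSpace.single i 1)).comp (Ψ.comp Pβ) +
    ∑ j, C j i • ((EuclideanSpace.proj j).comp Pγ)) + (EuclideanSpace.proj i).comp Pξ₁

noncomputable def c2 (C : Matrix (Fin m) (Fin k) ℝ) (d : Fin m → ℝ)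
    (βstar : E) (γstar : F) (j : Fin m) : ((E × F) × (E × F)) →L[ℝ] ℝ :=
  γstar j • ((∑ i, C j i • ((EuclideanSpace.proj i).comp Pβ)) - (EuclideanSpace.proj j).comp Pξ₂) +
  ((∑ i, C j i * βstar i) - d j - 0) • ((EuclideanSpace.proj j).comp Pγ)

theorem hasFDerivAt_coord1 {h : E → ℝ} {C : Matrix (Fin m) (Fin k) ℝ}
    {βstar : E} {γstar : F} {Ψ : E →L[ℝ] E →L[ℝ] ℝ}
    (hΨ : HasFDerivAt (fderiv ℝ h) Ψ βstar) (i : Fin k) :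
    HasFDerivAt
      (fun x : (E × F) × (E × F) => gradE h x.1.1 i + (∑ j, C j i * x.1.2 j) + x.2.1 i)
      (c1 C Ψ i) ((βstar, γstar), 0) := by
  exact (((ContinuousLinearMap.apply ℝ ℝ (EuclideanSpace.single i 1)).hasFDerivAt.comp _
      (hΨ.comp (((βstar, γstar), (0 : E × F)) : (E × F) × (E × F)) Pβ.hasFDerivAt)).add
    (HasFDerivAt.fun_sum fun j _ => ((EuclideanSpace.proj j).comp Pγ).hasFDerivAt.const_mul (C j i))).add
    ((EuclideanSpace.proj i).comp Pξ₁).hasFDerivAt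

theorem hasFDerivAt_coord2 {C : Matrix (Fin m) (Fin k) ℝ} {d : Fin m → ℝ}
    {βstar : E} {γstar : F} (j : Fin m) :
    HasFDerivAt
      (fun x : (E × F) × (E × F) => x.1.2 j * ((∑ i, C j i * x.1.1 i) - d j - x.2.2 j))
      (c2 C d βstar γstar j) ((βstar, γstar), 0) := by
  exact HasFDerivAt.mul (x := (((βstar, γstar), (0 : E × F)) : (E × F) × (E × F)))
    ((EuclideanSpace.proj j).comp Pγ).hasFDerivAt
    (((HasFDerivAt.fun_sum fun i _ =>
        ((EuclideanSpace.proj i).comp Pβ).hasFDerivAt.const_mul (C j i)).sub_const (d j)).sub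
      ((EuclideanSpace.proj j).comp Pξ₂).hasFDerivAt)

theorem hasFDerivAt_kkt {h : E → ℝ} {C : Matrix (Fin m) (Fin k) ℝ} {d : Fin m → ℝ}
    {βstar : E} {γstar : F} {Ψ : E →L[ℝ] E →L[ℝ] ℝ}
    (hΨ : HasFDerivAt (fderiv ℝ h) Ψ βstar) :
    HasFDerivAt (fun x : (E × F) × (E × F) => Hkkt h C d x.1 x.2)
      (kktD C d βstar γstar Ψ) ((βstar, γstar), 0) := by
  have h1' : HasFDerivAt (fun x : (E × F) × (E × F) =>
      (fun i => gradE h x.1.1 i + (∑ j, C j i * x.1.2 j) + x.2.1 i : Fin k → ℝ))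
      (ContinuousLinearMap.pi (c1 C Ψ)) ((βstar, γstar), 0) :=
    hasFDerivAt_pi.2 fun i => hasFDerivAt_coord1 hΨ i
  have h2' : HasFDerivAt (fun x : (E × F) × (E × F) =>
      (fun j => x.1.2 j * ((∑ i, C j i * x.1.1 i) - d j - x.2.2 j) : Fin m → ℝ))
      (ContinuousLinearMap.pi (c2 C d βstar γstar)) ((βstar, γstar), 0) :=
    hasFDerivAt_pi.2 fun j => hasFDerivAt_coord2 j
  have h1 := ((PiLp.continuousLinearEquiv 2 ℝ (fun _ : Fin k => ℝ)).comp_hasFDerivAt_iff'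
      (f := fun x : (E × F) × (E × F) =>
        (WithLp.toLp 2 (fun i => gradE h x.1.1 i + (∑ j, C j i * x.1.2 j) + x.2.1 i : Fin k → ℝ) : E))
      (f' := ContinuousLinearMap.pi (c1 C Ψ))).1 h1'
  have h2 := ((PiLp.continuousLinearEquiv 2 ℝ (fun _ : Fin m => ℝ)).comp_hasFDerivAt_iff'
      (f := fun x : (E × F) × (E × F) =>
        (WithLp.toLp 2 (fun j => x.1.2 j * ((∑ i, C j i * x.1.1 i) - d j - x.2.2 j) : Fin m → ℝ) : F))
      (f' := ContinuousLinearMap.pi (c2 C d βstar γstar))).1 h2'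
  have hcomb := h1.prodMk h2
  have heq : (((PiLp.continuousLinearEquiv 2 ℝ (fun _ : Fin k => ℝ)).symm :
        (Fin k → ℝ) →L[ℝ] E).comp (ContinuousLinearMap.pi (c1 C Ψ))).prod
      (((PiLp.continuousLinearEquiv 2 ℝ (fun _ : Fin m => ℝ)).symm :
        (Fin m → ℝ) →L[ℝ] F).comp (ContinuousLinearMap.pi (c2 C d βstar γstar))) =
      kktD C d βstar γstar Ψ := by
    refine ContinuousLinearMap.ext fun v => Prod.ext (PiLp.ext fun i => ?_) (PiLp.ext fun j => ?_) <;>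
      simp [c1, c2, Pβ, Pγ, Pξ₁, Pξ₂, kktD_apply, ContinuousLinearMap.prod_apply,
        ContinuousLinearMap.coe_comp', Function.comp, ContinuousLinearEquiv.coe_coe,
        ContinuousLinearMap.pi_apply, ContinuousLinearMap.add_apply,
        ContinuousLinearMap.sum_apply, ContinuousLinearMap.smul_apply,
        ContinuousLinearMap.apply_apply, smul_eq_mul, sub_zero] <;> ring
  rw [heq] at hcomb
  exact hcomb

theorem contDiff_coord {n : ℕ} (i : Fin n) :
    ContDiff ℝ 1 (fun x : EuclideanSpace ℝ (Fin n) => x i) :=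
  (EuclideanSpace.proj (𝕜 := ℝ) i).contDiff

theorem contDiff_kkt {h : E → ℝ} {C : Matrix (Fin m) (Fin k) ℝ} {d : Fin m → ℝ}
    (hh : ContDiff ℝ 2 h) :
    ContDiff ℝ 1 (fun x : (E × F) × (E × F) => Hkkt h C d x.1 x.2) := by
  have hΦ : ContDiff ℝ 1 (fderiv ℝ h) := hh.fderiv_right (by norm_num)
  have hA : ContDiff ℝ 1 (fun x : (E × F) × (E × F) =>
      (fun i => gradE h x.1.1 i + (∑ j, C j i * x.1.2 j) + x.2.1 i : Fin k → ℝ)) := by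
    refine contDiff_pi.2 fun i => ?_
    exact (((hΦ.comp ((contDiff_fst : ContDiff ℝ 1 (Prod.fst : E × F → E)).comp (contDiff_fst : ContDiff ℝ 1 (Prod.fst : (E × F) × (E × F) → E × F)))).clm_apply contDiff_const).add
      (ContDiff.sum fun j _ => contDiff_const.mul
        ((contDiff_coord j).comp (contDiff_snd.comp contDiff_fst)))).add
      ((contDiff_coord i).comp (contDiff_fst.comp contDiff_snd))
  have hB : ContDiff ℝ 1 (fun x : (E × F) × (E × F) =>
      (fun j => x.1.2 j * ((∑ i, C j i * x.1.1 i) - d j - x.2.2 j) : Fin m → ℝ)) := by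
    refine contDiff_pi.2 fun j => ?_
    exact ((contDiff_coord j).comp (contDiff_snd.comp contDiff_fst)).mul
      (((ContDiff.sum fun i _ => contDiff_const.mul
          ((contDiff_coord i).comp (contDiff_fst.comp contDiff_fst))).sub
        contDiff_const).sub
        ((contDiff_coord j).comp (contDiff_snd.comp contDiff_snd)))
  have hA' : ContDiff ℝ 1 (fun x : (E × F) × (E × F) => (Hkkt h C d x.1 x.2).1) :=
    ((PiLp.continuousLinearEquiv 2 ℝ (fun _ : Fin k => ℝ)).comp_contDiff_iff).1 hA
  have hB' : ContDiff ℝ 1 (fun x : (E × F) × (E × F) => (Hkkt h C d x.1 x.2).2) :=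
    ((PiLp.continuousLinearEquiv 2 ℝ (fun _ : Fin m => ℝ)).comp_contDiff_iff).1 hB
  exact hA'.prodMk hB'

theorem euclid_eq_sum {n : ℕ} (x : EuclideanSpace ℝ (Fin n)) :
    x = ∑ l, x l • EuclideanSpace.single l (1:ℝ) := by
  ext i
  have h2 : (∑ l, x l • EuclideanSpace.single l (1:ℝ)) i
      = ∑ l : Fin n, (x l • EuclideanSpace.single l (1:ℝ)) i :=
    map_sum (EuclideanSpace.proj (𝕜 := ℝ) i) (fun l => x l • EuclideanSpace.single l (1:ℝ)) Finset.univ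
  rw [h2]
  simp [EuclideanSpace.single_apply, PiLp.smul_apply]

theorem clm_expand {n : ℕ} (ψ : EuclideanSpace ℝ (Fin n) →L[ℝ] ℝ) (u : EuclideanSpace ℝ (Fin n)) :
    ψ u = ∑ l, u l * ψ (EuclideanSpace.single l 1) := by
  conv_lhs => rw [euclid_eq_sum u]
  rw [map_sum]
  simp [smul_eq_mul]

theorem kktA_ker {h : E → ℝ} {C : Matrix (Fin m) (Fin k) ℝ} {d : Fin m → ℝ}
    {βstar : E} {γstar : F} {Ψ : E →L[ℝ] E →L[ℝ] ℝ}
    (hC : LinearIndependent ℝ (fun j : Fin m => (fun i => C j i : Fin k → ℝ)))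
    (hsc : ∀ j, ((∑ i, C j i * βstar i) = d j ∧ 0 < γstar j) ∨
                ((∑ i, C j i * βstar i) < d j ∧ γstar j = 0))
    (hpd : (hessE h βstar).PosDef)
    (hhess : ∀ i j, Ψ (EuclideanSpace.single i 1) (EuclideanSpace.single j 1) = hessE h βstar i j)
    (q : E × F) (hq : kktD C d βstar γstar Ψ (q, 0) = 0) : q = 0 := by
  obtain ⟨u, w⟩ := q
  rw [kktD_apply] at hq
  have key1 : ∀ i, Ψ u (EuclideanSpace.single i 1) + (∑ j, C j i * w j) = 0 := by
    intro i
    have h3 := congrArg (·.ofLp i) (congrArg Prod.fst hq)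
    simpa using h3
  have key2 : ∀ j, w j * ((∑ i, C j i * βstar i) - d j) + γstar j * (∑ i, C j i * u i) = 0 := by
    intro j
    have h3 := congrArg (·.ofLp j) (congrArg Prod.snd hq)
    simpa using h3
  have hCu : ∀ j, γstar j * (∑ i, C j i * u i) = 0 ∧ w j * (∑ i, C j i * u i) = 0 := by
    intro j
    rcases hsc j with ⟨ha, hpos⟩ | ⟨hlt, hz⟩
    · have h0 : (∑ i, C j i * βstar i) - d j = 0 := by rw [ha]; ring
      have h3 := key2 j
      rw [h0, mul_zero, zero_add] at h3
      have hCu0 : (∑ i, C j i * u i) = 0 := by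
        rcases mul_eq_zero.1 h3 with h' | h'
        · exact absurd h' (ne_of_gt hpos)
        · exact h'
      exact ⟨by rw [hCu0, mul_zero], by rw [hCu0, mul_zero]⟩
    · have h3 := key2 j
      rw [hz, zero_mul, add_zero] at h3
      have hw0 : w j = 0 := by
        rcases mul_eq_zero.1 h3 with h' | h'
        · exact h'
        · exact absurd h' (sub_ne_zero.2 (ne_of_lt hlt))
      exact ⟨by rw [hz, zero_mul], by rw [hw0, zero_mul]⟩
  have hQ : Ψ u u = 0 := by
    have hsum : ∑ i, u i * (Ψ u (EuclideanSpace.single i 1) + (∑ j, C j i * w j)) = 0 := by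
      simp [key1]
    have e1 : Ψ u u = ∑ i, u i * Ψ u (EuclideanSpace.single i 1) := clm_expand (Ψ u) u
    have e2 : ∑ i, u i * (∑ j, C j i * w j) = ∑ j, w j * (∑ i, C j i * u i) := by
      simp only [Finset.mul_sum]
      rw [Finset.sum_comm]
      exact Finset.sum_congr rfl fun j _ => Finset.sum_congr rfl fun i _ => by ring
    have e3 : ∑ j, w j * (∑ i, C j i * u i) = 0 :=
      Finset.sum_eq_zero fun j _ => (hCu j).2
    have e4 : ∑ i, u i * (Ψ u (EuclideanSpace.single i 1) + (∑ j, C j i * w j))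
        = (∑ i, u i * Ψ u (EuclideanSpace.single i 1)) + ∑ i, u i * (∑ j, C j i * w j) := by
      simp [mul_add, Finset.sum_add_distrib]
    calc Ψ u u = Ψ u u + ∑ j, w j * (∑ i, C j i * u i) := by rw [e3, add_zero]
    _ = ∑ i, u i * (Ψ u (EuclideanSpace.single i 1) + (∑ j, C j i * w j)) := by
        rw [e4, ← e1, ← e2]
    _ = 0 := hsum
  have hu : u = 0 := by
    by_contra hu0
    have hpos := hpd.dotProduct_mulVec_pos (x := u.ofLp) (fun hc => hu0 (by ext i; exact congrFun hc i))
    have hform : star u.ofLp ⬝ᵥ ((hessE h βstar) *ᵥ u.ofLp) = Ψ u u := by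
      have e1 : Ψ u u = ∑ l, u l * (Ψ u (EuclideanSpace.single l 1)) := clm_expand (Ψ u) u
      have e2 : ∀ l, Ψ u (EuclideanSpace.single l 1) = ∑ i, u i * hessE h βstar i l := by
        intro l
        have h3 := clm_expand
          ((ContinuousLinearMap.apply ℝ ℝ (EuclideanSpace.single l 1)).comp Ψ) u
        simp only [ContinuousLinearMap.coe_comp', Function.comp_apply,
          ContinuousLinearMap.apply_apply] at h3
        rw [h3]
        exact Finset.sum_congr rfl fun i _ => by rw [hhess]
      simp only [dotProduct, Matrix.mulVec, Pi.star_apply, star_trivial]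
      rw [e1]
      simp only [e2, Finset.mul_sum]
      rw [Finset.sum_comm]
      exact Finset.sum_congr rfl fun i _ => Finset.sum_congr rfl fun l _ => by ring
    rw [hform, hQ] at hpos
    exact lt_irrefl 0 hpos
  have hw : w = 0 := by
    have hker : ∀ i, ∑ j, C j i * w j = 0 := by
      intro i
      have h3 := key1 i
      rw [hu] at h3
      simpa using h3
    have h0 := Fintype.linearIndependent_iff.1 hC w ?_
    · ext j; exact h0 j
    · funext i
      simp only [Finset.sum_apply, Pi.smul_apply, smul_eq_mul, Pi.zero_apply]
      rw [show ∑ j, w j * C j i = ∑ j, C j i * w j from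
        Finset.sum_congr rfl fun j _ => mul_comm _ _]
      exact hker i
  rw [hu, hw]
  rfl

end Stmt8Aux

open Stmt8Aux

set_option maxHeartbeats 1000000

/-- Implicit-function theorem for the KKT system of the perturbed linearly
constrained program: under strict complementarity, LICQ (linearly independent rows of `C`) and
positive definiteness of `∇²h(β*)`, (a) the partial Jacobian of `H` in `(β, γ)` at
`(β*, γ*, 0)` is invertible, and (b) there is a `C¹` implicit solution map `ξ ↦ (β̄(ξ), γ̄(ξ))`
around `ξ = 0` with `(β̄(0), γ̄(0)) = (β*, γ*)`, `H(β̄(ξ), γ̄(ξ), ξ) = 0`, and derivative at `0`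
equal to `−[J_{(β,γ)}H]⁻¹ · J_ξ H` where `J_ξ H = blockdiag(I_k, −diag(γ*))`. -/
theorem stmt8 {k m : ℕ}
    (h : EuclideanSpace ℝ (Fin k) → ℝ) (hh : ContDiff ℝ 2 h)
    (C : Matrix (Fin m) (Fin k) ℝ)
    (hC : LinearIndependent ℝ (fun j : Fin m => (fun i => C j i : Fin k → ℝ)))
    (d : Fin m → ℝ)
    (βstar : EuclideanSpace ℝ (Fin k)) (γstar : EuclideanSpace ℝ (Fin m))
    (hstat : ∀ i, gradE h βstar i + ∑ j, C j i * γstar j = 0)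
    (hcs : ∀ j, γstar j * ((∑ i, C j i * βstar i) - d j) = 0)
    (hsc : ∀ j, ((∑ i, C j i * βstar i) = d j ∧ 0 < γstar j) ∨
                ((∑ i, C j i * βstar i) < d j ∧ γstar j = 0))
    (hpd : (hessE h βstar).PosDef) :
    -- (a) invertibility of the partial Jacobian in (β, γ) at (β*, γ*, 0)
    Function.Bijective (fderiv ℝ (fun p => Hkkt h C d p 0) (βstar, γstar)) ∧
    -- (b) the local implicit solution map and its derivative at ξ = 0
    (∃ U ∈ nhds (0 : EuclideanSpace ℝ (Fin k) × EuclideanSpace ℝ (Fin m)),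
      ∃ s : EuclideanSpace ℝ (Fin k) × EuclideanSpace ℝ (Fin m) →
            EuclideanSpace ℝ (Fin k) × EuclideanSpace ℝ (Fin m),
        ContDiffOn ℝ 1 s U ∧ s 0 = (βstar, γstar) ∧
        (∀ ξ ∈ U, Hkkt h C d (s ξ) ξ = 0) ∧
        (∀ v : EuclideanSpace ℝ (Fin k) × EuclideanSpace ℝ (Fin m),
          fderiv ℝ (fun p => Hkkt h C d p 0) (βstar, γstar) (fderiv ℝ s 0 v)
            = (-v.1, WithLp.toLp 2 (fun j => γstar j * v.2 j : Fin m → ℝ)))) := by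
  classical
  have hΦ : ContDiff ℝ 1 (fderiv ℝ h) := hh.fderiv_right (by norm_num)
  have hΨ : HasFDerivAt (fderiv ℝ h) (fderiv ℝ (fderiv ℝ h) βstar) βstar :=
    ((hΦ.differentiable one_ne_zero) βstar).hasFDerivAt
  have hhess : ∀ i j, (fderiv ℝ (fderiv ℝ h) βstar) (EuclideanSpace.single i 1)
      (EuclideanSpace.single j 1) = hessE h βstar i j := by
    intro i j
    have happ : HasFDerivAt
        (⇑(ContinuousLinearMap.apply ℝ ℝ ((EuclideanSpace.single j 1 : EuclideanSpace ℝ (Fin k)))))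
        (ContinuousLinearMap.apply ℝ ℝ ((EuclideanSpace.single j 1 : EuclideanSpace ℝ (Fin k))))
        (fderiv ℝ h βstar) :=
      (ContinuousLinearMap.apply ℝ ℝ ((EuclideanSpace.single j 1 : EuclideanSpace ℝ (Fin k)))).hasFDerivAt
    have hcomp : HasFDerivAt (fun y => fderiv ℝ h y (EuclideanSpace.single j 1))
        ((ContinuousLinearMap.apply ℝ ℝ (EuclideanSpace.single j 1)).comp
          (fderiv ℝ (fderiv ℝ h) βstar)) βstar :=
      happ.comp βstar hΨ
    have h4 : hessE h βstar i j
        = fderiv ℝ (fun y => fderiv ℝ h y (EuclideanSpace.single j 1)) βstar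
            (EuclideanSpace.single i 1) := rfl
    rw [h4, hcomp.fderiv]
    rfl
  have hdkkt := hasFDerivAt_kkt (C := C) (d := d) (γstar := γstar) hΨ
  have hA : HasFDerivAt (fun p : EuclideanSpace ℝ (Fin k) × EuclideanSpace ℝ (Fin m) =>
        Hkkt h C d p 0)
      ((kktD C d βstar γstar (fderiv ℝ (fderiv ℝ h) βstar)).comp
        (ContinuousLinearMap.inl ℝ (EuclideanSpace ℝ (Fin k) × EuclideanSpace ℝ (Fin m)) (EuclideanSpace ℝ (Fin k) × EuclideanSpace ℝ (Fin m)))) (βstar, γstar) :=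
    by have := hdkkt.comp (βstar, γstar) (ContinuousLinearMap.inl ℝ (EuclideanSpace ℝ (Fin k) × EuclideanSpace ℝ (Fin m)) (EuclideanSpace ℝ (Fin k) × EuclideanSpace ℝ (Fin m))).hasFDerivAt; exact this
  have hAker : ∀ q, kktD C d βstar γstar (fderiv ℝ (fderiv ℝ h) βstar) (q, 0) = 0 → q = 0 :=
    kktA_ker hC hsc hpd hhess
  have hAinj : Function.Injective
      ⇑((kktD C d βstar γstar (fderiv ℝ (fderiv ℝ h) βstar)).comp
        (ContinuousLinearMap.inl ℝ (EuclideanSpace ℝ (Fin k) × EuclideanSpace ℝ (Fin m)) (EuclideanSpace ℝ (Fin k) × EuclideanSpace ℝ (Fin m)))) := by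
    intro a b hab
    have h1 : kktD C d βstar γstar (fderiv ℝ (fderiv ℝ h) βstar) (a - b, 0) = 0 := by
      have h2 : ((a - b, (0 : EuclideanSpace ℝ (Fin k) × EuclideanSpace ℝ (Fin m))) :
          (EuclideanSpace ℝ (Fin k) × EuclideanSpace ℝ (Fin m)) ×
          (EuclideanSpace ℝ (Fin k) × EuclideanSpace ℝ (Fin m)))
          = (a, 0) - (b, 0) := by
        refine Prod.ext ?_ ?_ <;> simp
      rw [h2, map_sub]
      have hab' : kktD C d βstar γstar (fderiv ℝ (fderiv ℝ h) βstar) (a, 0)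
          = kktD C d βstar γstar (fderiv ℝ (fderiv ℝ h) βstar) (b, 0) := hab
      rw [hab', sub_self]
    exact sub_eq_zero.1 (hAker _ h1)
  have hAsurj : Function.Surjective
      ⇑((kktD C d βstar γstar (fderiv ℝ (fderiv ℝ h) βstar)).comp
        (ContinuousLinearMap.inl ℝ (EuclideanSpace ℝ (Fin k) × EuclideanSpace ℝ (Fin m)) (EuclideanSpace ℝ (Fin k) × EuclideanSpace ℝ (Fin m)))) :=
    (LinearMap.injective_iff_surjective_of_finrank_eq_finrank
      (f := ((kktD C d βstar γstar (fderiv ℝ (fderiv ℝ h) βstar)).comp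
        (ContinuousLinearMap.inl ℝ (EuclideanSpace ℝ (Fin k) × EuclideanSpace ℝ (Fin m)) (EuclideanSpace ℝ (Fin k) × EuclideanSpace ℝ (Fin m))) :
        (EuclideanSpace ℝ (Fin k) × EuclideanSpace ℝ (Fin m)) →ₗ[ℝ]
        (EuclideanSpace ℝ (Fin k) × EuclideanSpace ℝ (Fin m)))) rfl).1 hAinj
  refine ⟨?_, ?_⟩
  · rw [hA.fderiv]
    exact ⟨hAinj, hAsurj⟩
  -- part (b)
  have hLker : ∀ z : (EuclideanSpace ℝ (Fin k) × EuclideanSpace ℝ (Fin m)) × (EuclideanSpace ℝ (Fin k) × EuclideanSpace ℝ (Fin m)),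
      (kktD C d βstar γstar (fderiv ℝ (fderiv ℝ h) βstar)).prod (ContinuousLinearMap.snd ℝ (EuclideanSpace ℝ (Fin k) × EuclideanSpace ℝ (Fin m)) (EuclideanSpace ℝ (Fin k) × EuclideanSpace ℝ (Fin m))) z = 0 → z = 0 := by
    intro z hz
    have h2 : z.2 = 0 := congrArg Prod.snd hz
    have h1 : kktD C d βstar γstar (fderiv ℝ (fderiv ℝ h) βstar) z = 0 := congrArg Prod.fst hz
    have h3 : z = (z.1, (0 : (EuclideanSpace ℝ (Fin k) × EuclideanSpace ℝ (Fin m)))) := Prod.ext rfl h2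
    have h4 : z.1 = 0 := hAker z.1 (by rw [← h3]; exact h1)
    exact h3.trans (by rw [h4]; rfl)
  have hLinj : Function.Injective
      ⇑((kktD C d βstar γstar (fderiv ℝ (fderiv ℝ h) βstar)).prod (ContinuousLinearMap.snd ℝ (EuclideanSpace ℝ (Fin k) × EuclideanSpace ℝ (Fin m)) (EuclideanSpace ℝ (Fin k) × EuclideanSpace ℝ (Fin m)))) := by
    intro a b hab
    have h1 : (kktD C d βstar γstar (fderiv ℝ (fderiv ℝ h) βstar)).prod (ContinuousLinearMap.snd ℝ (EuclideanSpace ℝ (Fin k) × EuclideanSpace ℝ (Fin m)) (EuclideanSpace ℝ (Fin k) × EuclideanSpace ℝ (Fin m))) (a - b) = 0 := by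
      rw [map_sub, hab, sub_self]
    exact sub_eq_zero.1 (hLker _ h1)
  have hLsurj : Function.Surjective
      ⇑((kktD C d βstar γstar (fderiv ℝ (fderiv ℝ h) βstar)).prod (ContinuousLinearMap.snd ℝ (EuclideanSpace ℝ (Fin k) × EuclideanSpace ℝ (Fin m)) (EuclideanSpace ℝ (Fin k) × EuclideanSpace ℝ (Fin m)))) :=
    (LinearMap.injective_iff_surjective_of_finrank_eq_finrank
      (f := ((kktD C d βstar γstar (fderiv ℝ (fderiv ℝ h) βstar)).prod (ContinuousLinearMap.snd ℝ (EuclideanSpace ℝ (Fin k) × EuclideanSpace ℝ (Fin m)) (EuclideanSpace ℝ (Fin k) × EuclideanSpace ℝ (Fin m))) :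
        ((EuclideanSpace ℝ (Fin k) × EuclideanSpace ℝ (Fin m)) × (EuclideanSpace ℝ (Fin k) × EuclideanSpace ℝ (Fin m))) →ₗ[ℝ] ((EuclideanSpace ℝ (Fin k) × EuclideanSpace ℝ (Fin m)) × (EuclideanSpace ℝ (Fin k) × EuclideanSpace ℝ (Fin m))))) rfl).1 hLinj
  let Lequiv : ((EuclideanSpace ℝ (Fin k) × EuclideanSpace ℝ (Fin m)) × (EuclideanSpace ℝ (Fin k) × EuclideanSpace ℝ (Fin m))) ≃L[ℝ] ((EuclideanSpace ℝ (Fin k) × EuclideanSpace ℝ (Fin m)) × (EuclideanSpace ℝ (Fin k) × EuclideanSpace ℝ (Fin m))) :=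
    (LinearEquiv.ofBijective
      ((kktD C d βstar γstar (fderiv ℝ (fderiv ℝ h) βstar)).prod (ContinuousLinearMap.snd ℝ (EuclideanSpace ℝ (Fin k) × EuclideanSpace ℝ (Fin m)) (EuclideanSpace ℝ (Fin k) × EuclideanSpace ℝ (Fin m))) : ((EuclideanSpace ℝ (Fin k) × EuclideanSpace ℝ (Fin m)) × (EuclideanSpace ℝ (Fin k) × EuclideanSpace ℝ (Fin m))) →ₗ[ℝ] ((EuclideanSpace ℝ (Fin k) × EuclideanSpace ℝ (Fin m)) × (EuclideanSpace ℝ (Fin k) × EuclideanSpace ℝ (Fin m))))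
      ⟨hLinj, hLsurj⟩).toContinuousLinearEquiv
  have hLco : (Lequiv : ((EuclideanSpace ℝ (Fin k) × EuclideanSpace ℝ (Fin m)) × (EuclideanSpace ℝ (Fin k) × EuclideanSpace ℝ (Fin m))) →L[ℝ] ((EuclideanSpace ℝ (Fin k) × EuclideanSpace ℝ (Fin m)) × (EuclideanSpace ℝ (Fin k) × EuclideanSpace ℝ (Fin m))))
      = (kktD C d βstar γstar (fderiv ℝ (fderiv ℝ h) βstar)).prod (ContinuousLinearMap.snd ℝ (EuclideanSpace ℝ (Fin k) × EuclideanSpace ℝ (Fin m)) (EuclideanSpace ℝ (Fin k) × EuclideanSpace ℝ (Fin m))) :=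
    ContinuousLinearMap.ext fun v => rfl
  have hGc : ContDiffAt ℝ 1 (fun x : (EuclideanSpace ℝ (Fin k) × EuclideanSpace ℝ (Fin m)) × (EuclideanSpace ℝ (Fin k) × EuclideanSpace ℝ (Fin m)) => (Hkkt h C d x.1 x.2, x.2))
      ((βstar, γstar), 0) := ((contDiff_kkt hh).prodMk contDiff_snd).contDiffAt
  have hGd : HasFDerivAt (fun x : (EuclideanSpace ℝ (Fin k) × EuclideanSpace ℝ (Fin m)) × (EuclideanSpace ℝ (Fin k) × EuclideanSpace ℝ (Fin m)) => (Hkkt h C d x.1 x.2, x.2))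
      (Lequiv : ((EuclideanSpace ℝ (Fin k) × EuclideanSpace ℝ (Fin m)) × (EuclideanSpace ℝ (Fin k) × EuclideanSpace ℝ (Fin m))) →L[ℝ] ((EuclideanSpace ℝ (Fin k) × EuclideanSpace ℝ (Fin m)) × (EuclideanSpace ℝ (Fin k) × EuclideanSpace ℝ (Fin m)))) ((βstar, γstar), 0) := by
    rw [hLco]
    exact hdkkt.prodMk (ContinuousLinearMap.snd ℝ (EuclideanSpace ℝ (Fin k) × EuclideanSpace ℝ (Fin m)) (EuclideanSpace ℝ (Fin k) × EuclideanSpace ℝ (Fin m))).hasFDerivAt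
  have hstrict : HasStrictFDerivAt (fun x : (EuclideanSpace ℝ (Fin k) × EuclideanSpace ℝ (Fin m)) × (EuclideanSpace ℝ (Fin k) × EuclideanSpace ℝ (Fin m)) => (Hkkt h C d x.1 x.2, x.2))
      (Lequiv : ((EuclideanSpace ℝ (Fin k) × EuclideanSpace ℝ (Fin m)) × (EuclideanSpace ℝ (Fin k) × EuclideanSpace ℝ (Fin m))) →L[ℝ] ((EuclideanSpace ℝ (Fin k) × EuclideanSpace ℝ (Fin m)) × (EuclideanSpace ℝ (Fin k) × EuclideanSpace ℝ (Fin m)))) ((βstar, γstar), 0) :=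
    hGc.hasStrictFDerivAt' hGd one_ne_zero
  have hGpt : (fun x : (EuclideanSpace ℝ (Fin k) × EuclideanSpace ℝ (Fin m)) × (EuclideanSpace ℝ (Fin k) × EuclideanSpace ℝ (Fin m)) => (Hkkt h C d x.1 x.2, x.2))
      (((βstar, γstar), 0) : (EuclideanSpace ℝ (Fin k) × EuclideanSpace ℝ (Fin m)) × (EuclideanSpace ℝ (Fin k) × EuclideanSpace ℝ (Fin m))) = 0 := by
    have h1 : Hkkt h C d (βstar, γstar) 0 = 0 := by
      refine Prod.ext (PiLp.ext fun i => ?_) (PiLp.ext fun j => ?_)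
      · simpa [Hkkt] using hstat i
      · simpa [Hkkt] using hcs j
    exact Prod.ext h1 rfl
  -- the implicit function
  have hsCD : ContDiffAt ℝ 1
      (fun ξ : (EuclideanSpace ℝ (Fin k) × EuclideanSpace ℝ (Fin m)) => ((hstrict.localInverse _ _ _) ((0 : (EuclideanSpace ℝ (Fin k) × EuclideanSpace ℝ (Fin m))), ξ)).1) 0 := by
    have h5 : ContDiffAt ℝ 1 (hGc.localInverse hGd one_ne_zero) (0 : (EuclideanSpace ℝ (Fin k) × EuclideanSpace ℝ (Fin m)) × (EuclideanSpace ℝ (Fin k) × EuclideanSpace ℝ (Fin m))) := by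
      have h5' := hGc.to_localInverse hGd one_ne_zero
      convert h5' using 1
      first
      | exact hGpt.symm
      | exact congrArg Prod.fst hGpt.symm
    have h6 : ContDiffAt ℝ 1
        (fun ξ : (EuclideanSpace ℝ (Fin k) × EuclideanSpace ℝ (Fin m)) => (hstrict.localInverse _ _ _) ((0 : (EuclideanSpace ℝ (Fin k) × EuclideanSpace ℝ (Fin m))), ξ)) 0 :=
      h5.comp 0 (ContinuousLinearMap.inr ℝ (EuclideanSpace ℝ (Fin k) × EuclideanSpace ℝ (Fin m)) (EuclideanSpace ℝ (Fin k) × EuclideanSpace ℝ (Fin m))).contDiff.contDiffAt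
    exact ContDiffAt.comp 0 contDiffAt_fst h6
  obtain ⟨U₁, hU₁, hsOn⟩ := hsCD.contDiffOn le_rfl (by simp)
  have hER : ∀ᶠ y in nhds (0 : (EuclideanSpace ℝ (Fin k) × EuclideanSpace ℝ (Fin m)) × (EuclideanSpace ℝ (Fin k) × EuclideanSpace ℝ (Fin m))),
      (fun x : (EuclideanSpace ℝ (Fin k) × EuclideanSpace ℝ (Fin m)) × (EuclideanSpace ℝ (Fin k) × EuclideanSpace ℝ (Fin m)) => (Hkkt h C d x.1 x.2, x.2)) ((hstrict.localInverse _ _ _) y) = y := by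
    have hER' := hstrict.eventually_right_inverse
    convert hER' using 1
    first
      | exact hGpt.symm
      | exact congrArg nhds hGpt.symm
  have hT := ((ContinuousLinearMap.inr ℝ (EuclideanSpace ℝ (Fin k) × EuclideanSpace ℝ (Fin m)) (EuclideanSpace ℝ (Fin k) × EuclideanSpace ℝ (Fin m))).continuous.continuousAt
    (x := (0 : (EuclideanSpace ℝ (Fin k) × EuclideanSpace ℝ (Fin m))))).preimage_mem_nhds hER
  refine ⟨U₁ ∩ _, Filter.inter_mem hU₁ hT,
    fun ξ : (EuclideanSpace ℝ (Fin k) × EuclideanSpace ℝ (Fin m)) => ((hstrict.localInverse _ _ _) ((0 : (EuclideanSpace ℝ (Fin k) × EuclideanSpace ℝ (Fin m))), ξ)).1,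
    hsOn.mono Set.inter_subset_left, ?_, ?_, ?_⟩
  · show ((hstrict.localInverse _ _ _) (0 : (EuclideanSpace ℝ (Fin k) × EuclideanSpace ℝ (Fin m)) × (EuclideanSpace ℝ (Fin k) × EuclideanSpace ℝ (Fin m)))).1 = (βstar, γstar)
    rw [← hGpt, hstrict.localInverse_apply_image]
  · intro ξ hξ
    have h7 : (fun x : (EuclideanSpace ℝ (Fin k) × EuclideanSpace ℝ (Fin m)) × (EuclideanSpace ℝ (Fin k) × EuclideanSpace ℝ (Fin m)) => (Hkkt h C d x.1 x.2, x.2))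
        ((hstrict.localInverse _ _ _) ((0 : (EuclideanSpace ℝ (Fin k) × EuclideanSpace ℝ (Fin m))), ξ)) = ((0 : (EuclideanSpace ℝ (Fin k) × EuclideanSpace ℝ (Fin m))), ξ) := hξ.2
    have h8 : ((hstrict.localInverse _ _ _) ((0 : (EuclideanSpace ℝ (Fin k) × EuclideanSpace ℝ (Fin m))), ξ)).2 = ξ := congrArg Prod.snd h7
    have h9 : Hkkt h C d ((hstrict.localInverse _ _ _) ((0 : (EuclideanSpace ℝ (Fin k) × EuclideanSpace ℝ (Fin m))), ξ)).1
        ((hstrict.localInverse _ _ _) ((0 : (EuclideanSpace ℝ (Fin k) × EuclideanSpace ℝ (Fin m))), ξ)).2 = 0 := congrArg Prod.fst h7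
    rw [h8] at h9
    exact h9
  · intro v
    have hsder : HasFDerivAt
        (fun ξ : (EuclideanSpace ℝ (Fin k) × EuclideanSpace ℝ (Fin m)) => ((hstrict.localInverse _ _ _) ((0 : (EuclideanSpace ℝ (Fin k) × EuclideanSpace ℝ (Fin m))), ξ)).1)
        ((ContinuousLinearMap.fst ℝ (EuclideanSpace ℝ (Fin k) × EuclideanSpace ℝ (Fin m)) (EuclideanSpace ℝ (Fin k) × EuclideanSpace ℝ (Fin m))).comp
          (((Lequiv.symm : ((EuclideanSpace ℝ (Fin k) × EuclideanSpace ℝ (Fin m)) × (EuclideanSpace ℝ (Fin k) × EuclideanSpace ℝ (Fin m))) →L[ℝ] ((EuclideanSpace ℝ (Fin k) × EuclideanSpace ℝ (Fin m)) × (EuclideanSpace ℝ (Fin k) × EuclideanSpace ℝ (Fin m))))).comp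
            (ContinuousLinearMap.inr ℝ (EuclideanSpace ℝ (Fin k) × EuclideanSpace ℝ (Fin m)) (EuclideanSpace ℝ (Fin k) × EuclideanSpace ℝ (Fin m))))) 0 := by
      have h10 : HasStrictFDerivAt (hstrict.localInverse _ _ _)
          ((Lequiv.symm : ((EuclideanSpace ℝ (Fin k) × EuclideanSpace ℝ (Fin m)) × (EuclideanSpace ℝ (Fin k) × EuclideanSpace ℝ (Fin m))) →L[ℝ] ((EuclideanSpace ℝ (Fin k) × EuclideanSpace ℝ (Fin m)) × (EuclideanSpace ℝ (Fin k) × EuclideanSpace ℝ (Fin m))))) (0 : (EuclideanSpace ℝ (Fin k) × EuclideanSpace ℝ (Fin m)) × (EuclideanSpace ℝ (Fin k) × EuclideanSpace ℝ (Fin m))) := by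
        have h10' := hstrict.to_localInverse
        convert h10' using 1
        all_goals first
        | exact hGpt.symm
        | exact congrArg Prod.fst hGpt.symm
        | rfl
      exact (ContinuousLinearMap.fst ℝ (EuclideanSpace ℝ (Fin k) × EuclideanSpace ℝ (Fin m)) (EuclideanSpace ℝ (Fin k) × EuclideanSpace ℝ (Fin m))).hasFDerivAt.comp (0 : (EuclideanSpace ℝ (Fin k) × EuclideanSpace ℝ (Fin m)))
        (h10.hasFDerivAt.comp (0 : (EuclideanSpace ℝ (Fin k) × EuclideanSpace ℝ (Fin m))) (ContinuousLinearMap.inr ℝ (EuclideanSpace ℝ (Fin k) × EuclideanSpace ℝ (Fin m)) (EuclideanSpace ℝ (Fin k) × EuclideanSpace ℝ (Fin m))).hasFDerivAt)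
    rw [hA.fderiv, hsder.fderiv]
    simp only [ContinuousLinearMap.coe_comp', Function.comp_apply,
      ContinuousLinearMap.inr_apply, ContinuousLinearMap.coe_fst',
      ContinuousLinearMap.inl_apply, ContinuousLinearEquiv.coe_coe]
    have hz : (kktD C d βstar γstar (fderiv ℝ (fderiv ℝ h) βstar)).prod (ContinuousLinearMap.snd ℝ (EuclideanSpace ℝ (Fin k) × EuclideanSpace ℝ (Fin m)) (EuclideanSpace ℝ (Fin k) × EuclideanSpace ℝ (Fin m)))
        (Lequiv.symm ((0 : (EuclideanSpace ℝ (Fin k) × EuclideanSpace ℝ (Fin m))), v)) = ((0 : (EuclideanSpace ℝ (Fin k) × EuclideanSpace ℝ (Fin m))), v) := by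
      rw [← hLco]
      exact Lequiv.apply_symm_apply ((0 : (EuclideanSpace ℝ (Fin k) × EuclideanSpace ℝ (Fin m))), v)
    have h12 : kktD C d βstar γstar (fderiv ℝ (fderiv ℝ h) βstar) (Lequiv.symm ((0 : (EuclideanSpace ℝ (Fin k) × EuclideanSpace ℝ (Fin m))), v)) = 0 := congrArg Prod.fst hz
    have h13 : (Lequiv.symm ((0 : (EuclideanSpace ℝ (Fin k) × EuclideanSpace ℝ (Fin m))), v)).2 = v := congrArg Prod.snd hz
    have h14 : (((Lequiv.symm ((0 : (EuclideanSpace ℝ (Fin k) × EuclideanSpace ℝ (Fin m))), v)).1, (0 : (EuclideanSpace ℝ (Fin k) × EuclideanSpace ℝ (Fin m)))) : (EuclideanSpace ℝ (Fin k) × EuclideanSpace ℝ (Fin m)) × (EuclideanSpace ℝ (Fin k) × EuclideanSpace ℝ (Fin m)))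
        = Lequiv.symm ((0 : (EuclideanSpace ℝ (Fin k) × EuclideanSpace ℝ (Fin m))), v) - ((0 : (EuclideanSpace ℝ (Fin k) × EuclideanSpace ℝ (Fin m))), (Lequiv.symm ((0 : (EuclideanSpace ℝ (Fin k) × EuclideanSpace ℝ (Fin m))), v)).2) := by
      refine Prod.ext ?_ ?_ <;> simp
    rw [h14, map_sub, h12, h13, zero_sub]
    refine Prod.ext (PiLp.ext fun i => ?_) (PiLp.ext fun j => ?_) <;>
      simp [kktD_apply, Prod.fst_neg, Prod.snd_neg, PiLp.neg_apply, PiLp.zero_apply,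
        map_zero, ContinuousLinearMap.zero_apply, Finset.sum_const_zero]
end

section
/- Let Y be an integrable random variable, A ∈ {0,1}, X a covariate vector, π(X) = P(A = 1 | X), and μ_a(X) = E[Y | X, A = a] for a ∈ {0,1} (so that E[Y | X, A] = A·μ₁(X) + (1 − A)·μ₀(X)). Then for any δ ∈ (0, ∞): E[ Y(δA + 1 − A) / (δπ(X) + 1 − π(X)) ] = E[ (δπ(X) μ₁(X) + (1 − π(X)) μ₀(X)) / (δπ(X) + 1 − π(X)) ]. -/
open MeasureTheory

/-- With `π(X)` a version of `E[A | X]` and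
`E[Y | X, A] = A·μ₁(X) + (1 − A)·μ₀(X)` a.e., for any `δ ∈ (0, ∞)`:
`E[Y(δA + 1 − A)/(δπ(X) + 1 − π(X))] = E[(δπ(X)μ₁(X) + (1 − π(X))μ₀(X))/(δπ(X) + 1 − π(X))]`. -/
theorem stmt10
    {Ω : Type*} [MeasurableSpace Ω] (μ : Measure Ω) [IsProbabilityMeasure μ]
    {p : ℕ} (X : Ω → (Fin p → ℝ)) (hX : Measurable X)
    (A Y : Ω → ℝ) (hA : Measurable A) (hYm : Measurable Y) (hY : Integrable Y μ)
    (hAbin : ∀ ω, A ω = 0 ∨ A ω = 1)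
    (π μ0 μ1 : (Fin p → ℝ) → ℝ)
    (hπm : Measurable π) (hμ0m : Measurable μ0) (hμ1m : Measurable μ1)
    (hπ : (fun ω => π (X ω)) =ᵐ[μ] μ[A | MeasurableSpace.comap X inferInstance])
    (hμcond : μ[Y | MeasurableSpace.comap (fun ω => (X ω, A ω)) inferInstance]
        =ᵐ[μ] fun ω => A ω * μ1 (X ω) + (1 - A ω) * μ0 (X ω))
    (δ : ℝ) (hδ : 0 < δ) :
    ∫ ω, Y ω * (δ * A ω + 1 - A ω) / (δ * π (X ω) + 1 - π (X ω)) ∂μ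
      = ∫ ω, (δ * π (X ω) * μ1 (X ω) + (1 - π (X ω)) * μ0 (X ω))
            / (δ * π (X ω) + 1 - π (X ω)) ∂μ := by
  have hm₁ : MeasurableSpace.comap X inferInstance ≤ _ := hX.comap_le
  have hm₂ : MeasurableSpace.comap (fun ω => (X ω, A ω)) inferInstance ≤ _ :=
    (hX.prodMk hA).comap_le
  -- basic facts about A
  have hA01 : ∀ ω, 0 ≤ A ω ∧ A ω ≤ 1 := by
    intro ω; rcases hAbin ω with h | h <;> rw [h] <;> constructor <;> norm_num
  have hAint : Integrable A μ := by
    refine Integrable.mono' (integrable_const 1) hA.aestronglyMeasurable ?_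
    exact Filter.Eventually.of_forall fun ω => by
      rw [Real.norm_eq_abs, abs_le]; exact ⟨by linarith [(hA01 ω).1], (hA01 ω).2⟩
  -- π(X) ∈ [0,1] a.e.
  have hπ0 : ∀ᵐ ω ∂μ, 0 ≤ π (X ω) := by
    filter_upwards [hπ, condExp_nonneg (m := (MeasurableSpace.comap X inferInstance))
      (Filter.Eventually.of_forall fun ω => (hA01 ω).1)] with ω h1 h2
    rw [h1]; exact h2
  have hπ1 : ∀ᵐ ω ∂μ, π (X ω) ≤ 1 := by
    have hle : μ[A | (MeasurableSpace.comap X inferInstance)] ≤ᵐ[μ] μ[(fun _ => (1:ℝ)) | (MeasurableSpace.comap X inferInstance)] :=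
      condExp_mono hAint (integrable_const 1)
        (Filter.Eventually.of_forall fun ω => (hA01 ω).2)
    filter_upwards [hπ, hle] with ω h1 h2
    rw [h1]; simpa [condExp_const hm₁ (1:ℝ)] using h2
  -- denominator bound
  set d : Ω → ℝ := fun ω => δ * π (X ω) + 1 - π (X ω) with hd
  have hdlb : ∀ᵐ ω ∂μ, min δ 1 ≤ d ω := by
    filter_upwards [hπ0, hπ1] with ω h0 h1
    show min δ 1 ≤ δ * π (X ω) + 1 - π (X ω)
    rcases le_total δ 1 with h | h
    · rw [min_eq_left h]; nlinarith
    · rw [min_eq_right h]; nlinarith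
  have hmpos : (0:ℝ) < min δ 1 := lt_min hδ one_pos
  -- the weight w
  set w : Ω → ℝ := fun ω => (δ * A ω + 1 - A ω) / d ω with hw
  have hwmeas : StronglyMeasurable[(MeasurableSpace.comap (fun ω => (X ω, A ω)) inferInstance)] w := by
    have hT : Measurable[(MeasurableSpace.comap (fun ω => (X ω, A ω)) inferInstance)] (fun ω => (X ω, A ω)) :=
      Measurable.of_comap_le le_rfl
    have hg : Measurable (fun q : (Fin p → ℝ) × ℝ =>
        (δ * q.2 + 1 - q.2) / (δ * π q.1 + 1 - π q.1)) := by
      fun_prop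
    exact (hg.comp hT).stronglyMeasurable
  have hwbd : ∀ᵐ ω ∂μ, ‖w ω‖ ≤ max δ 1 / min δ 1 := by
    filter_upwards [hdlb] with ω hdw
    have hnum0 : 0 ≤ δ * A ω + 1 - A ω := by
      rcases hAbin ω with h | h <;> rw [h] <;> nlinarith
    have hnum1 : δ * A ω + 1 - A ω ≤ max δ 1 := by
      rcases hAbin ω with h | h <;> rw [h] <;> simp [le_max_left, le_max_right]
    show ‖(δ * A ω + 1 - A ω) / (δ * π (X ω) + 1 - π (X ω))‖ ≤ max δ 1 / min δ 1
    rw [Real.norm_eq_abs, abs_div, abs_of_nonneg hnum0,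
      abs_of_nonneg (le_trans (le_of_lt hmpos) hdw)]
    exact div_le_div₀ (le_trans (by positivity) (le_max_left δ 1)) hnum1 hmpos hdw
  have hwY : Integrable (fun ω => w ω * Y ω) μ :=
    hY.bdd_mul ((hwmeas.mono hm₂).aestronglyMeasurable) hwbd
  -- step A: pull out w
  have hpull : μ[(w * Y) | (MeasurableSpace.comap (fun ω => (X ω, A ω)) inferInstance)] =ᵐ[μ] w * μ[Y | (MeasurableSpace.comap (fun ω => (X ω, A ω)) inferInstance)] :=
    condExp_mul_of_stronglyMeasurable_left hwmeas (by exact hwY) hY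
  have stepA : ∫ ω, w ω * Y ω ∂μ
      = ∫ ω, w ω * (A ω * μ1 (X ω) + (1 - A ω) * μ0 (X ω)) ∂μ := by
    rw [show (fun ω => w ω * Y ω) = w * Y from rfl, ← integral_condExp hm₂]
    refine integral_congr_ae ?_
    filter_upwards [hpull, hμcond] with ω h1 h2
    simp only [Pi.mul_apply] at h1 ⊢
    rw [h1, h2]
  -- integrability pieces
  have hI : Integrable (fun ω => A ω * μ1 (X ω) + (1 - A ω) * μ0 (X ω)) μ :=
    (integrable_condExp).congr hμcond
  have hI1 : Integrable (fun ω => A ω * μ1 (X ω)) μ := by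
    have hbd : ∀ᵐ ω ∂μ, ‖A ω‖ ≤ (1:ℝ) := Filter.Eventually.of_forall fun ω => by
      rw [Real.norm_eq_abs, abs_le]; exact ⟨by linarith [(hA01 ω).1], (hA01 ω).2⟩
    have := hI.bdd_mul hA.aestronglyMeasurable hbd
    refine this.congr (Filter.Eventually.of_forall fun ω => ?_)
    simp only []
    rcases hAbin ω with h | h <;> rw [h] <;> ring
  have hI0 : Integrable (fun ω => (1 - A ω) * μ0 (X ω)) μ := by
    have hbd : ∀ᵐ ω ∂μ, ‖1 - A ω‖ ≤ (1:ℝ) := Filter.Eventually.of_forall fun ω => by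
      rw [Real.norm_eq_abs, abs_le]
      exact ⟨by linarith [(hA01 ω).2], by linarith [(hA01 ω).1]⟩
    have := hI.bdd_mul (hA.const_sub 1).aestronglyMeasurable hbd
    refine this.congr (Filter.Eventually.of_forall fun ω => ?_)
    simp only []
    rcases hAbin ω with h | h <;> rw [h] <;> ring
  have hdinv_bd : ∀ᵐ ω ∂μ, ‖(d ω)⁻¹‖ ≤ (min δ 1)⁻¹ := by
    filter_upwards [hdlb] with ω hdw
    rw [Real.norm_eq_abs, abs_of_nonneg (inv_nonneg.mpr (le_trans hmpos.le hdw))]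
    exact inv_anti₀ hmpos hdw
  have hdm : Measurable d := by rw [hd]; fun_prop
  have hJ1 : Integrable (fun ω => A ω * μ1 (X ω) / d ω) μ := by
    have := hI1.bdd_mul (hdm.inv).aestronglyMeasurable hdinv_bd
    exact this.congr (Filter.Eventually.of_forall fun ω => by
      simp only [div_eq_inv_mul, Pi.inv_apply]; try ring)
  have hJ0 : Integrable (fun ω => (1 - A ω) * μ0 (X ω) / d ω) μ := by
    have := hI0.bdd_mul (hdm.inv).aestronglyMeasurable hdinv_bd
    exact this.congr (Filter.Eventually.of_forall fun ω => by
      simp only [div_eq_inv_mul, Pi.inv_apply]; try ring)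
  -- step B: algebraic identity using A ∈ {0,1}
  have stepB : ∫ ω, w ω * (A ω * μ1 (X ω) + (1 - A ω) * μ0 (X ω)) ∂μ
      = (∫ ω, δ * (A ω * μ1 (X ω) / d ω) ∂μ)
        + ∫ ω, (1 - A ω) * μ0 (X ω) / d ω ∂μ := by
    rw [← integral_add (hJ1.const_mul δ) hJ0]
    refine integral_congr_ae (Filter.Eventually.of_forall fun ω => ?_)
    rcases hAbin ω with h | h <;> simp only [hw, h] <;> ring
  -- the (MeasurableSpace.comap X inferInstance)-measurable factors
  have hXm₁ : Measurable[(MeasurableSpace.comap X inferInstance)] X := Measurable.of_comap_le le_rfl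
  have hf1meas : StronglyMeasurable[(MeasurableSpace.comap X inferInstance)] (fun ω => δ * μ1 (X ω) / d ω) := by
    have hg : Measurable (fun x : Fin p → ℝ =>
        δ * μ1 x / (δ * π x + 1 - π x)) := by fun_prop
    exact (hg.comp hXm₁).stronglyMeasurable
  have hf0meas : StronglyMeasurable[(MeasurableSpace.comap X inferInstance)] (fun ω => μ0 (X ω) / d ω) := by
    have hg : Measurable (fun x : Fin p → ℝ =>
        μ0 x / (δ * π x + 1 - π x)) := by fun_prop
    exact (hg.comp hXm₁).stronglyMeasurable
  -- term 1
  have hfg1 : Integrable ((fun ω => δ * μ1 (X ω) / d ω) * A) μ := by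
    refine (hJ1.const_mul δ).congr (Filter.Eventually.of_forall fun ω => ?_)
    simp only [Pi.mul_apply]; ring
  have hpull1 : μ[(fun ω => δ * μ1 (X ω) / d ω) * A | (MeasurableSpace.comap X inferInstance)]
      =ᵐ[μ] (fun ω => δ * μ1 (X ω) / d ω) * μ[A | (MeasurableSpace.comap X inferInstance)] :=
    condExp_mul_of_stronglyMeasurable_left hf1meas hfg1 hAint
  have term1 : ∫ ω, δ * (A ω * μ1 (X ω) / d ω) ∂μ
      = ∫ ω, (δ * μ1 (X ω) / d ω) * π (X ω) ∂μ := by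
    rw [show (fun ω => δ * (A ω * μ1 (X ω) / d ω))
        = (fun ω => δ * μ1 (X ω) / d ω) * A from funext fun ω => by
          simp only [Pi.mul_apply]; ring,
      ← integral_condExp hm₁]
    refine integral_congr_ae ?_
    filter_upwards [hpull1, hπ] with ω h1 h2
    simp only [Pi.mul_apply] at h1 ⊢
    rw [h1, ← h2]
  -- term 2
  have h1Aint : Integrable (fun ω => 1 - A ω) μ := (integrable_const 1).sub hAint
  have hfg0 : Integrable ((fun ω => μ0 (X ω) / d ω) * (fun ω => 1 - A ω)) μ := by
    refine hJ0.congr (Filter.Eventually.of_forall fun ω => ?_)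
    simp only [Pi.mul_apply]; ring
  have hpull0 : μ[(fun ω => μ0 (X ω) / d ω) * (fun ω => 1 - A ω) | (MeasurableSpace.comap X inferInstance)]
      =ᵐ[μ] (fun ω => μ0 (X ω) / d ω) * μ[(fun ω => 1 - A ω) | (MeasurableSpace.comap X inferInstance)] :=
    condExp_mul_of_stronglyMeasurable_left hf0meas hfg0 h1Aint
  have hc1A : μ[(fun ω => 1 - A ω) | (MeasurableSpace.comap X inferInstance)] =ᵐ[μ] fun ω => 1 - π (X ω) := by
    have h1 : μ[(fun _ => (1:ℝ)) - A | (MeasurableSpace.comap X inferInstance)]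
        =ᵐ[μ] μ[(fun _ => (1:ℝ)) | (MeasurableSpace.comap X inferInstance)] - μ[A | (MeasurableSpace.comap X inferInstance)] :=
      condExp_sub (integrable_const 1) hAint _
    filter_upwards [h1, hπ] with ω ha hc
    have h2 : (fun ω => 1 - A ω) = (fun _ => (1:ℝ)) - A := rfl
    rw [h2, ha]
    simp only [Pi.sub_apply, condExp_const hm₁ (1:ℝ)]
    rw [← hc]
  have term2 : ∫ ω, (1 - A ω) * μ0 (X ω) / d ω ∂μ
      = ∫ ω, (μ0 (X ω) / d ω) * (1 - π (X ω)) ∂μ := by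
    rw [show (fun ω => (1 - A ω) * μ0 (X ω) / d ω)
        = (fun ω => μ0 (X ω) / d ω) * (fun ω => 1 - A ω) from funext fun ω => by
          simp only [Pi.mul_apply]; ring,
      ← integral_condExp hm₁]
    refine integral_congr_ae ?_
    filter_upwards [hpull0, hc1A] with ω h1 h2
    simp only [Pi.mul_apply] at h1 ⊢
    rw [h1, h2]
  -- RHS integrability
  have hR1 : Integrable (fun ω => (δ * μ1 (X ω) / d ω) * π (X ω)) μ := by
    refine (integrable_condExp (f := (fun ω => δ * μ1 (X ω) / d ω) * A) (m := (MeasurableSpace.comap X inferInstance))).congr ?_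
    filter_upwards [hpull1, hπ] with ω h1 h2
    simp only [Pi.mul_apply] at h1 ⊢
    rw [h1, ← h2]
  have hR0 : Integrable (fun ω => (μ0 (X ω) / d ω) * (1 - π (X ω))) μ := by
    refine (integrable_condExp
      (f := (fun ω => μ0 (X ω) / d ω) * (fun ω => 1 - A ω)) (m := (MeasurableSpace.comap X inferInstance))).congr ?_
    filter_upwards [hpull0, hc1A] with ω h1 h2
    simp only [Pi.mul_apply] at h1 ⊢
    rw [h1, h2]
  -- assemble
  have hLHS : (fun ω => Y ω * (δ * A ω + 1 - A ω) / d ω) = fun ω => w ω * Y ω :=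
    funext fun ω => by simp only [hw]; ring
  calc ∫ ω, Y ω * (δ * A ω + 1 - A ω) / d ω ∂μ
      = ∫ ω, w ω * Y ω ∂μ := by rw [hLHS]
    _ = ∫ ω, w ω * (A ω * μ1 (X ω) + (1 - A ω) * μ0 (X ω)) ∂μ := stepA
    _ = (∫ ω, δ * (A ω * μ1 (X ω) / d ω) ∂μ)
        + ∫ ω, (1 - A ω) * μ0 (X ω) / d ω ∂μ := stepB
    _ = (∫ ω, (δ * μ1 (X ω) / d ω) * π (X ω) ∂μ)
        + ∫ ω, (μ0 (X ω) / d ω) * (1 - π (X ω)) ∂μ := by rw [term1, term2]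
    _ = ∫ ω, (δ * π (X ω) * μ1 (X ω) + (1 - π (X ω)) * μ0 (X ω)) / d ω ∂μ := by
        rw [← integral_add hR1 hR0]
        refine integral_congr_ae (Filter.Eventually.of_forall fun ω => ?_)
        ring
end

section
/- Let 0 < ε < 1/2 and suppose ε < π₁(X) < 1 − ε almost surely. Then the uncentered efficient influence function φ_Q satisfies E[ φ_Q(Z; η, δ) ] = E[ (δπ₁(X) μ₁(X) + π₀(X) μ₀(X)) / (δπ₁(X) + π₀(X)) ]; that is, its mean equals the identified mean counterfactual outcome under the incremental intervention. -/
open MeasureTheory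

set_option maxHeartbeats 1000000

lemma aux_pullout {Ω : Type*} {m m0 : MeasurableSpace Ω} (hm : m ≤ m0) (μ : @Measure Ω m0)
    [IsFiniteMeasure μ] {f g h : Ω → ℝ} (hf : StronglyMeasurable[m] f)
    (hg : Integrable g μ) (hfg : Integrable (fun ω => f ω * g ω) μ)
    (hh : h =ᵐ[μ] μ[g|m]) :
    ∫ ω, f ω * g ω ∂μ = ∫ ω, f ω * h ω ∂μ := by
  haveI : SigmaFinite (μ.trim hm) := inferInstance
  calc ∫ ω, f ω * g ω ∂μ
      = ∫ ω, (μ[fun ω => f ω * g ω|m]) ω ∂μ := (integral_condExp hm).symm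
    _ = ∫ ω, f ω * (μ[g|m]) ω ∂μ := integral_congr_ae (condExp_mul_of_stronglyMeasurable_left hf hfg hg)
    _ = ∫ ω, f ω * h ω ∂μ := integral_congr_ae (hh.mono fun ω h' => by simp only []; rw [← h'])


lemma key_a0 (d pi y v1 v0 : ℝ) (hπ : pi ≠ 0) (hπ0 : 1 - pi ≠ 0)
    (hD : d * pi + (1 - pi) ≠ 0) :
    (d * pi * ((if (0:ℝ) = 1 then (1:ℝ) else 0) / pi * (y - v1) + v1)
      + (1 - pi) * ((if (0:ℝ) = 0 then (1:ℝ) else 0) / (1 - pi) * (y - v0) + v0))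
      / (d * pi + (1 - pi))
    + d * (v1 - v0) * ((0:ℝ) - pi) / (d * pi + (1 - pi)) ^ 2
    = (d * pi * v1 + (1 - pi) * v0) / (d * pi + (1 - pi))
      + (d * 0 + (1 - 0)) / (d * pi + (1 - pi)) * (y - (0 * v1 + (1 - 0) * v0))
      + d * (v1 - v0) / (d * pi + (1 - pi)) ^ 2 * ((0:ℝ) - pi) := by
    norm_num
    field_simp
    ring

lemma key_a1 (d pi y v1 v0 : ℝ) (hπ : pi ≠ 0) (hπ0 : 1 - pi ≠ 0)
    (hD : d * pi + (1 - pi) ≠ 0) :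
    (d * pi * ((if (1:ℝ) = 1 then (1:ℝ) else 0) / pi * (y - v1) + v1)
      + (1 - pi) * ((if (1:ℝ) = 0 then (1:ℝ) else 0) / (1 - pi) * (y - v0) + v0))
      / (d * pi + (1 - pi))
    + d * (v1 - v0) * ((1:ℝ) - pi) / (d * pi + (1 - pi)) ^ 2
    = (d * pi * v1 + (1 - pi) * v0) / (d * pi + (1 - pi))
      + (d * 1 + (1 - 1)) / (d * pi + (1 - pi)) * (y - (1 * v1 + (1 - 1) * v0))
      + d * (v1 - v0) / (d * pi + (1 - pi)) ^ 2 * ((1:ℝ) - pi) := by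
    norm_num
    field_simp
    ring

/-- Under strict positivity `ε < π₁(X) < 1 − ε`, the mean of the uncentered
efficient influence function `φ_Q(Z; η, δ)` equals the identified mean counterfactual outcome
`E[(δπ₁(X)μ₁(X) + π₀(X)μ₀(X))/(δπ₁(X) + π₀(X))]` under the incremental intervention. -/
theorem stmt11
    {Ω : Type*} [MeasurableSpace Ω] (μ : Measure Ω) [IsProbabilityMeasure μ]
    {p : ℕ} (X : Ω → (Fin p → ℝ)) (hX : Measurable X)
    (A Y : Ω → ℝ) (hA : Measurable A) (hYm : Measurable Y) (hY : Integrable Y μ)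
    (hAbin : ∀ ω, A ω = 0 ∨ A ω = 1)
    (π1 μ0 μ1 : (Fin p → ℝ) → ℝ)
    (hπm : Measurable π1) (hμ0m : Measurable μ0) (hμ1m : Measurable μ1)
    (ε : ℝ) (hε0 : 0 < ε) (hε2 : ε < 1 / 2)
    (hπbound : ∀ᵐ ω ∂μ, ε < π1 (X ω) ∧ π1 (X ω) < 1 - ε)
    -- π₁(X) is a version of P(A = 1 | X)
    (hπ : (fun ω => π1 (X ω)) =ᵐ[μ] μ[A | MeasurableSpace.comap X inferInstance])
    -- μ_a(X) = E[Y | X, A = a]: E[Y | X, A] = A μ₁(X) + (1 − A) μ₀(X) a.e.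
    (hμcond : μ[Y | MeasurableSpace.comap (fun ω => (X ω, A ω)) inferInstance]
        =ᵐ[μ] fun ω => A ω * μ1 (X ω) + (1 - A ω) * μ0 (X ω))
    (δ : ℝ) (hδ : 0 < δ) :
    -- E[φ_Q(Z; η, δ)] = E[(δπ₁μ₁ + π₀μ₀)/(δπ₁ + π₀)]
    ∫ ω,
        ((δ * π1 (X ω) *
            ((if A ω = 1 then (1:ℝ) else 0) / π1 (X ω) * (Y ω - μ1 (X ω)) + μ1 (X ω))
          + (1 - π1 (X ω)) *
            ((if A ω = 0 then (1:ℝ) else 0) / (1 - π1 (X ω)) * (Y ω - μ0 (X ω)) + μ0 (X ω)))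
          / (δ * π1 (X ω) + (1 - π1 (X ω)))
        + δ * (μ1 (X ω) - μ0 (X ω)) * (A ω - π1 (X ω))
          / (δ * π1 (X ω) + (1 - π1 (X ω))) ^ 2) ∂μ
      = ∫ ω, (δ * π1 (X ω) * μ1 (X ω) + (1 - π1 (X ω)) * μ0 (X ω))
            / (δ * π1 (X ω) + (1 - π1 (X ω))) ∂μ := by
  classical
  -- abbreviations
  set D : Ω → ℝ := fun ω => δ * π1 (X ω) + (1 - π1 (X ω)) with hDdef
  set tgt : Ω → ℝ := fun ω =>
    (δ * π1 (X ω) * μ1 (X ω) + (1 - π1 (X ω)) * μ0 (X ω)) / D ω with htgtdef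
  set mf : Ω → ℝ := fun ω => A ω * μ1 (X ω) + (1 - A ω) * μ0 (X ω) with hmfdef
  set f1 : Ω → ℝ := fun ω => (δ * A ω + (1 - A ω)) / D ω with hf1def
  set g2 : Ω → ℝ := fun ω => δ * (μ1 (X ω) - μ0 (X ω)) / D ω ^ 2 with hg2def
  have hmin : (0:ℝ) < min δ 1 := lt_min hδ one_pos
  -- σ-algebras
  have hm1 : MeasurableSpace.comap X inferInstance ≤ _ := hX.comap_le
  have hm2 : MeasurableSpace.comap (fun ω => (X ω, A ω)) inferInstance ≤ _ :=
    (hX.prodMk hA).comap_le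
  have hXm1 : Measurable[MeasurableSpace.comap X inferInstance] X :=
    Measurable.of_comap_le le_rfl
  have hXAm2 : Measurable[MeasurableSpace.comap (fun ω => (X ω, A ω)) inferInstance]
      (fun ω => (X ω, A ω)) := Measurable.of_comap_le le_rfl
  -- basic measurability
  have hπX : Measurable (fun ω => π1 (X ω)) := hπm.comp hX
  have hμ1X : Measurable (fun ω => μ1 (X ω)) := hμ1m.comp hX
  have hμ0X : Measurable (fun ω => μ0 (X ω)) := hμ0m.comp hX
  have hDm : Measurable D := (hπX.const_mul δ).add (measurable_const.sub hπX)
  -- A is 0/1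
  have hAnorm : ∀ ω, ‖A ω‖ ≤ 1 := by
    intro ω; rcases hAbin ω with h | h <;> simp [h]
  have hAint : Integrable A μ :=
    (integrable_const (1:ℝ)).mono' hA.aestronglyMeasurable (Filter.Eventually.of_forall hAnorm)
  -- a.e. bounds on π₁ and D
  have hDae : ∀ᵐ ω ∂μ, ε < π1 (X ω) ∧ π1 (X ω) < 1 - ε ∧ min δ 1 ≤ D ω := by
    filter_upwards [hπbound] with ω ⟨h1, h2⟩
    refine ⟨h1, h2, ?_⟩
    have h0 : 0 < π1 (X ω) := hε0.trans h1
    have h1' : π1 (X ω) < 1 := by linarith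
    have hd := min_le_left δ 1
    have h1m := min_le_right δ 1
    simp only [hDdef]
    nlinarith [mul_nonneg (sub_nonneg.2 hd) h0.le,
      mul_nonneg (sub_nonneg.2 h1m) (by linarith : (0:ℝ) ≤ 1 - π1 (X ω))]
  -- integrability of mf
  have hmfInt : Integrable mf μ := integrable_condExp.congr hμcond
  -- integrability of μ₁ ∘ X
  have hAμ1 : Integrable (fun ω => A ω * μ1 (X ω)) μ := by
    refine (hmfInt.bdd_mul (c := 1) hA.aestronglyMeasurable
      (Filter.Eventually.of_forall hAnorm)).congr (Filter.Eventually.of_forall fun ω => ?_)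
    simp only [hmfdef]
    rcases hAbin ω with h | h <;> simp [h]
  have habs1 : Integrable (fun ω => |μ1 (X ω)| * A ω) μ := by
    refine hAμ1.abs.congr (Filter.Eventually.of_forall fun ω => ?_)
    rcases hAbin ω with h | h <;> simp [h, abs_mul]
  have smabs1 : StronglyMeasurable[MeasurableSpace.comap X inferInstance]
      (fun ω => |μ1 (X ω)|) := ((hμ1m.abs).comp hXm1).stronglyMeasurable
  have hce1 : (μ[(fun ω => |μ1 (X ω)| * A ω) | MeasurableSpace.comap X inferInstance])
      =ᵐ[μ] fun ω => |μ1 (X ω)| * π1 (X ω) := by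
    refine (condExp_mul_of_stronglyMeasurable_left smabs1 habs1 hAint).trans ?_
    filter_upwards [hπ] with ω h
    simp only [Pi.mul_apply]; rw [← h]
  have hμ1πInt : Integrable (fun ω => |μ1 (X ω)| * π1 (X ω)) μ := integrable_condExp.congr hce1
  have hμ1Int : Integrable (fun ω => μ1 (X ω)) μ := by
    refine (hμ1πInt.const_mul ε⁻¹).mono' hμ1X.aestronglyMeasurable ?_
    filter_upwards [hπbound] with ω ⟨h1, _⟩
    rw [Real.norm_eq_abs]
    have h0 : 0 ≤ |μ1 (X ω)| := abs_nonneg _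
    have : ε * |μ1 (X ω)| ≤ |μ1 (X ω)| * π1 (X ω) := by nlinarith
    calc |μ1 (X ω)| = ε⁻¹ * (ε * |μ1 (X ω)|) := by field_simp
      _ ≤ ε⁻¹ * (|μ1 (X ω)| * π1 (X ω)) := by
          exact mul_le_mul_of_nonneg_left this (inv_nonneg.2 hε0.le)
  -- integrability of μ₀ ∘ X (with 1 - A and 1 - π₁)
  have hAint' : Integrable (fun ω => 1 - A ω) μ := (integrable_const (1:ℝ)).sub hAint
  have hπ' : (fun ω => 1 - π1 (X ω))
      =ᵐ[μ] μ[(fun ω => 1 - A ω) | MeasurableSpace.comap X inferInstance] := by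
    have hsub : (μ[(fun ω => (1:ℝ) - A ω) | MeasurableSpace.comap X inferInstance])
        =ᵐ[μ] μ[(fun _ => (1:ℝ)) | MeasurableSpace.comap X inferInstance]
          - μ[A | MeasurableSpace.comap X inferInstance] :=
      condExp_sub (integrable_const 1) hAint _
    refine (hsub.trans ?_).symm
    filter_upwards [hπ] with ω h
    simp only [Pi.sub_apply, condExp_const hm1, ← h]
  have hA0norm : ∀ ω, ‖1 - A ω‖ ≤ 1 := by
    intro ω; rcases hAbin ω with h | h <;> simp [h]
  have hA0μ0 : Integrable (fun ω => (1 - A ω) * μ0 (X ω)) μ := by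
    refine (hmfInt.bdd_mul (c := 1) (measurable_const.sub hA).aestronglyMeasurable
      (Filter.Eventually.of_forall hA0norm)).congr (Filter.Eventually.of_forall fun ω => ?_)
    simp only [hmfdef]
    rcases hAbin ω with h | h <;> simp [h]
  have habs0 : Integrable (fun ω => |μ0 (X ω)| * (1 - A ω)) μ := by
    refine hA0μ0.abs.congr (Filter.Eventually.of_forall fun ω => ?_)
    rcases hAbin ω with h | h <;> simp [h, abs_mul]
  have smabs0 : StronglyMeasurable[MeasurableSpace.comap X inferInstance]
      (fun ω => |μ0 (X ω)|) := ((hμ0m.abs).comp hXm1).stronglyMeasurable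
  have hce0 : (μ[(fun ω => |μ0 (X ω)| * (1 - A ω)) | MeasurableSpace.comap X inferInstance])
      =ᵐ[μ] fun ω => |μ0 (X ω)| * (1 - π1 (X ω)) := by
    refine (condExp_mul_of_stronglyMeasurable_left smabs0 habs0 hAint').trans ?_
    filter_upwards [hπ'] with ω h
    simp only [Pi.mul_apply]; rw [← h]
  have hμ0πInt : Integrable (fun ω => |μ0 (X ω)| * (1 - π1 (X ω))) μ :=
    integrable_condExp.congr hce0
  have hμ0Int : Integrable (fun ω => μ0 (X ω)) μ := by
    refine (hμ0πInt.const_mul ε⁻¹).mono' hμ0X.aestronglyMeasurable ?_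
    filter_upwards [hπbound] with ω ⟨_, h2⟩
    rw [Real.norm_eq_abs]
    have h0 : 0 ≤ |μ0 (X ω)| := abs_nonneg _
    have : ε * |μ0 (X ω)| ≤ |μ0 (X ω)| * (1 - π1 (X ω)) := by nlinarith
    calc |μ0 (X ω)| = ε⁻¹ * (ε * |μ0 (X ω)|) := by field_simp
      _ ≤ ε⁻¹ * (|μ0 (X ω)| * (1 - π1 (X ω))) :=
          mul_le_mul_of_nonneg_left this (inv_nonneg.2 hε0.le)
  -- integrability of the target
  have htgtInt : Integrable tgt μ := by
    refine (((hμ1Int.abs.const_mul δ).add hμ0Int.abs).div_const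
      (min δ 1)).mono' ?_ ?_
    · exact (((hπX.const_mul δ).mul hμ1X).add
        ((measurable_const.sub hπX).mul hμ0X)).div hDm |>.aestronglyMeasurable
    · filter_upwards [hDae] with ω ⟨h1, h2, hD⟩
      have h0 : 0 < π1 (X ω) := hε0.trans h1
      have h1' : π1 (X ω) < 1 := by linarith
      have hDpos : 0 < D ω := hmin.trans_le hD
      simp only [htgtdef, Real.norm_eq_abs, abs_div, abs_of_pos hDpos, Pi.add_apply]
      refine div_le_div₀ (by positivity) ?_ hmin hD
      calc |δ * π1 (X ω) * μ1 (X ω) + (1 - π1 (X ω)) * μ0 (X ω)|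
          ≤ |δ * π1 (X ω) * μ1 (X ω)| + |(1 - π1 (X ω)) * μ0 (X ω)| := abs_add_le _ _
        _ ≤ δ * |μ1 (X ω)| + |μ0 (X ω)| := by
            rw [abs_mul, abs_mul, abs_mul, abs_of_pos hδ, abs_of_pos h0,
              abs_of_pos (by linarith : (0:ℝ) < 1 - π1 (X ω))]
            nlinarith [mul_nonneg (mul_nonneg hδ.le (sub_nonneg.2 h1'.le)) (abs_nonneg (μ1 (X ω))),
              mul_nonneg h0.le (abs_nonneg (μ0 (X ω)))]
  -- f1-related integrability
  have hf1m : Measurable f1 := ((hA.const_mul δ).add (measurable_const.sub hA)).div hDm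
  have hmfm : Measurable mf := (hA.mul hμ1X).add ((measurable_const.sub hA).mul hμ0X)
  have hf1norm : ∀ᵐ ω ∂μ, ‖f1 ω‖ ≤ max δ 1 / min δ 1 := by
    filter_upwards [hDae] with ω ⟨h1, h2, hD⟩
    have hDpos : 0 < D ω := hmin.trans_le hD
    simp only [hf1def, Real.norm_eq_abs, abs_div, abs_of_pos hDpos]
    refine div_le_div₀ ?_ ?_ hmin hD
    · exact le_max_of_le_right zero_le_one
    · rcases hAbin ω with h | h
      · simp only [h, mul_zero, sub_zero, zero_add, abs_one]; exact le_max_right δ 1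
      · simp only [h, mul_one, sub_self, add_zero, abs_of_pos hδ]; exact le_max_left δ 1
  have hf1Y : Integrable (fun ω => f1 ω * Y ω) μ := by
    refine (hY.abs.const_mul (max δ 1 / min δ 1)).mono'
      (hf1m.mul hYm).aestronglyMeasurable ?_
    filter_upwards [hf1norm] with ω h
    rw [Real.norm_eq_abs, abs_mul]
    exact mul_le_mul_of_nonneg_right h (abs_nonneg _)
  have hf1mf : Integrable (fun ω => f1 ω * mf ω) μ := by
    refine (hmfInt.abs.const_mul (max δ 1 / min δ 1)).mono'
      (hf1m.mul hmfm).aestronglyMeasurable ?_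
    filter_upwards [hf1norm] with ω h
    rw [Real.norm_eq_abs, abs_mul]
    exact mul_le_mul_of_nonneg_right h (abs_nonneg _)
  have hR1Int : Integrable (fun ω => f1 ω * (Y ω - mf ω)) μ := by
    have heq : (fun ω => f1 ω * (Y ω - mf ω)) = fun ω => f1 ω * Y ω - f1 ω * mf ω :=
      funext fun ω => by ring
    rw [heq]; exact hf1Y.sub hf1mf
  -- zero mean of the f1 term
  have hFm : Measurable (fun q : (Fin p → ℝ) × ℝ =>
      (δ * q.2 + (1 - q.2)) / (δ * π1 q.1 + (1 - π1 q.1))) :=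
    ((measurable_snd.const_mul δ).add (measurable_const.sub measurable_snd)).div
      (((hπm.comp measurable_fst).const_mul δ).add
        (measurable_const.sub (hπm.comp measurable_fst)))
  have hf1sm : StronglyMeasurable[MeasurableSpace.comap (fun ω => (X ω, A ω)) inferInstance]
      f1 := (hFm.comp hXAm2).stronglyMeasurable
  have hR1zero : ∫ ω, f1 ω * (Y ω - mf ω) ∂μ = 0 := by
    have h1 : ∫ ω, f1 ω * Y ω ∂μ = ∫ ω, f1 ω * mf ω ∂μ :=
      aux_pullout hm2 μ hf1sm hY hf1Y hμcond.symm
    have heq : (fun ω => f1 ω * (Y ω - mf ω)) = fun ω => f1 ω * Y ω - f1 ω * mf ω :=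
      funext fun ω => by ring
    rw [heq, integral_sub hf1Y hf1mf, h1, sub_self]
  -- g2-related integrability
  have hg2m : Measurable g2 := ((hμ1X.sub hμ0X).const_mul δ).div (hDm.pow_const 2)
  have hg2norm : ∀ᵐ ω ∂μ, ‖g2 ω‖ ≤ δ * (|μ1 (X ω)| + |μ0 (X ω)|) / (min δ 1) ^ 2 := by
    filter_upwards [hDae] with ω ⟨h1, h2, hD⟩
    have hDpos : 0 < D ω := hmin.trans_le hD
    simp only [hg2def, Real.norm_eq_abs, abs_div, abs_pow, abs_of_pos hDpos]
    refine div_le_div₀ (by positivity) ?_ (by positivity) (pow_le_pow_left₀ hmin.le hD 2)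
    rw [abs_mul, abs_of_pos hδ]
    exact mul_le_mul_of_nonneg_left (abs_sub _ _) hδ.le
  have hg2Int : Integrable g2 μ := by
    refine ((((hμ1Int.abs.add hμ0Int.abs).const_mul δ).div_const
      ((min δ 1) ^ 2)).mono' hg2m.aestronglyMeasurable ?_)
    filter_upwards [hg2norm] with ω h
    convert h using 2 <;> simp only [Pi.add_apply] <;> ring
  have hg2A : Integrable (fun ω => g2 ω * A ω) μ := by
    refine (hg2Int.bdd_mul (c := 1) hA.aestronglyMeasurable
      (Filter.Eventually.of_forall hAnorm)).congr
      (Filter.Eventually.of_forall fun ω => mul_comm _ _)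
  have hg2π : Integrable (fun ω => g2 ω * π1 (X ω)) μ := by
    refine hg2Int.abs.mono' (hg2m.mul hπX).aestronglyMeasurable ?_
    filter_upwards [hπbound] with ω ⟨h1, h2⟩
    rw [Real.norm_eq_abs, abs_mul]
    have : |π1 (X ω)| ≤ 1 := by
      rw [abs_le]; constructor <;> [linarith [hε0.trans h1]; linarith]
    calc |g2 ω| * |π1 (X ω)| ≤ |g2 ω| * 1 :=
          mul_le_mul_of_nonneg_left this (abs_nonneg _)
      _ = |g2 ω| := mul_one _
  have hR2Int : Integrable (fun ω => g2 ω * (A ω - π1 (X ω))) μ := by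
    have heq : (fun ω => g2 ω * (A ω - π1 (X ω)))
        = fun ω => g2 ω * A ω - g2 ω * π1 (X ω) := funext fun ω => by ring
    rw [heq]; exact hg2A.sub hg2π
  -- zero mean of the g2 term
  have hGm : Measurable (fun x : Fin p → ℝ =>
      δ * (μ1 x - μ0 x) / (δ * π1 x + (1 - π1 x)) ^ 2) :=
    ((hμ1m.sub hμ0m).const_mul δ).div (((hπm.const_mul δ).add
      (measurable_const.sub hπm)).pow_const 2)
  have hg2sm : StronglyMeasurable[MeasurableSpace.comap X inferInstance] g2 :=
    (hGm.comp hXm1).stronglyMeasurable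
  have hR2zero : ∫ ω, g2 ω * (A ω - π1 (X ω)) ∂μ = 0 := by
    have h2 : ∫ ω, g2 ω * A ω ∂μ = ∫ ω, g2 ω * π1 (X ω) ∂μ :=
      aux_pullout hm1 μ hg2sm hAint hg2A hπ
    have heq : (fun ω => g2 ω * (A ω - π1 (X ω)))
        = fun ω => g2 ω * A ω - g2 ω * π1 (X ω) := funext fun ω => by ring
    rw [heq, integral_sub hg2A hg2π, h2, sub_self]
  -- a.e. decomposition of the integrand
  have hdecomp : (fun ω =>
        ((δ * π1 (X ω) *
            ((if A ω = 1 then (1:ℝ) else 0) / π1 (X ω) * (Y ω - μ1 (X ω)) + μ1 (X ω))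
          + (1 - π1 (X ω)) *
            ((if A ω = 0 then (1:ℝ) else 0) / (1 - π1 (X ω)) * (Y ω - μ0 (X ω)) + μ0 (X ω)))
          / (δ * π1 (X ω) + (1 - π1 (X ω)))
        + δ * (μ1 (X ω) - μ0 (X ω)) * (A ω - π1 (X ω))
          / (δ * π1 (X ω) + (1 - π1 (X ω))) ^ 2))
      =ᵐ[μ] fun ω => tgt ω + f1 ω * (Y ω - mf ω) + g2 ω * (A ω - π1 (X ω)) := by
    filter_upwards [hπbound] with ω ⟨h1, h2⟩
    have hπpos : 0 < π1 (X ω) := hε0.trans h1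
    have hπ0pos : 0 < 1 - π1 (X ω) := by linarith
    have hDpos : 0 < δ * π1 (X ω) + (1 - π1 (X ω)) := by nlinarith
    show _ = tgt ω + f1 ω * (Y ω - mf ω) + g2 ω * (A ω - π1 (X ω))
    simp only [htgtdef, hmfdef, hf1def, hg2def, hDdef]
    rcases hAbin ω with h | h <;> rw [h]
    · exact key_a0 δ (π1 (X ω)) (Y ω) (μ1 (X ω)) (μ0 (X ω)) hπpos.ne' hπ0pos.ne' hDpos.ne'
    · exact key_a1 δ (π1 (X ω)) (Y ω) (μ1 (X ω)) (μ0 (X ω)) hπpos.ne' hπ0pos.ne' hDpos.ne' 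
  -- conclusion
  refine (integral_congr_ae hdecomp).trans ?_
  have h12 : Integrable (fun ω => tgt ω + f1 ω * (Y ω - mf ω)) μ := htgtInt.add hR1Int
  rw [integral_add h12 hR2Int, integral_add htgtInt hR1Int,
    hR1zero, hR2zero, add_zero, add_zero]
end
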